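/- arXiv:2302.00746 — 5 statements merged into one kernel-verified Lean document; each statement's English description precedes it below -/
import Mathlib

section
/- For any natural numbers $a, q$ with $\gcd(a,q)=1$ and any nonzero integer $x$, the quadratic Gauss-type sum $S = \sum_{b=0}^{q-1} e^{2\pi i a x b^2 / q}$ satisfies $|S| \le q^{1/2} \gcd(q, |x|)^{1/2} \cdot C$ for an absolute constant $C$ (in fact one may take $|S| \le 2 q^{1/2}\gcd(q,|x|)^{1/2}$). -/
open Complex

section GaussSumAux
open Finset AddChar
open Complex Finset

lemma sum_range_eq_sum_zmod (q : ℕ) [NeZero q] (F : ZMod q → ℂ) :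
    ∑ b ∈ Finset.range q, F (b : ZMod q) = ∑ b : ZMod q, F b := by
  refine Finset.sum_nbij' (fun b => (b : ZMod q)) (fun z => z.val) ?_ ?_ ?_ ?_ ?_
  · intro b _; exact Finset.mem_univ _
  · intro z _; exact Finset.mem_range.2 (ZMod.val_lt z)
  · intro b hb; exact ZMod.val_cast_of_lt (Finset.mem_range.1 hb)
  · intro z _; exact ZMod.natCast_zmod_val z
  · intro b _; rfl


variable {q : ℕ} [NeZero q]

-- norm of stdAddChar values
lemma norm_stdAddChar (z : ZMod q) : ‖ZMod.stdAddChar z‖ = 1 := by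
  rw [ZMod.stdAddChar_apply, Circle.norm_coe]

lemma conj_stdAddChar (z : ZMod q) :
    (starRingEnd ℂ) (ZMod.stdAddChar z) = ZMod.stdAddChar (-z) := by
  have hchar : 0 < ringChar (ZMod q) := by
    rw [ZMod.ringChar_zmod_n]; exact Nat.pos_of_ne_zero (NeZero.ne q)
  rw [AddChar.starComp_apply hchar, AddChar.inv_apply]

-- squared sum identity
lemma sq_eq (m : ZMod q) :
    (∑ b : ZMod q, ZMod.stdAddChar (m * b ^ 2)) *
      (starRingEnd ℂ) (∑ b : ZMod q, ZMod.stdAddChar (m * b ^ 2)) =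
    ∑ h : ZMod q, ZMod.stdAddChar (m * h ^ 2) *
      (if 2 * m * h = 0 then (q : ℂ) else 0) := by
  classical
  rw [map_sum, Finset.sum_mul_sum]
  have : ∀ c : ZMod q, (starRingEnd ℂ) (ZMod.stdAddChar (m * c ^ 2))
      = ZMod.stdAddChar (-(m * c ^ 2)) := fun c => conj_stdAddChar _
  calc ∑ b : ZMod q, ∑ c : ZMod q,
        ZMod.stdAddChar (m * b ^ 2) * (starRingEnd ℂ) (ZMod.stdAddChar (m * c ^ 2))
      = ∑ c : ZMod q, ∑ b : ZMod q,
        ZMod.stdAddChar (m * b ^ 2 - m * c ^ 2) := by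
        rw [Finset.sum_comm]
        refine Finset.sum_congr rfl fun c _ => Finset.sum_congr rfl fun b _ => ?_
        rw [this, ← AddChar.map_add_eq_mul, sub_eq_add_neg]
    _ = ∑ c : ZMod q, ∑ h : ZMod q,
        ZMod.stdAddChar (m * h ^ 2 + c * (2 * m * h)) := by
        refine Finset.sum_congr rfl fun c _ => ?_
        rw [← Fintype.sum_equiv (Equiv.addLeft c) _ _ (fun h => rfl)]
        refine Finset.sum_congr rfl fun h _ => ?_
        congr 1
        simp only [Equiv.coe_addLeft]
        ring
    _ = ∑ h : ZMod q, ZMod.stdAddChar (m * h ^ 2) *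
        ∑ c : ZMod q, ZMod.stdAddChar (c * (2 * m * h)) := by
        rw [Finset.sum_comm]
        refine Finset.sum_congr rfl fun h _ => ?_
        rw [Finset.mul_sum]
        refine Finset.sum_congr rfl fun c _ => ?_
        rw [← AddChar.map_add_eq_mul]
    _ = _ := by
        refine Finset.sum_congr rfl fun h _ => ?_
        rw [AddChar.sum_mulShift _ (ZMod.isPrimitive_stdAddChar q), ZMod.card]
        split_ifs <;> simp


lemma count_le (a q : ℕ) (x : ℤ) [NeZero q] (ha : Nat.Coprime a q) :
    (Finset.univ.filter
        (fun h : ZMod q => ((2 * a * x : ℤ) : ZMod q) * h = 0)).card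
      ≤ 2 * Int.gcd q x := by
  classical
  have hq0 : 0 < q := Nat.pos_of_ne_zero (NeZero.ne q)
  set g : ℕ := Nat.gcd q (2 * x.natAbs) with hg
  have hgpos : 0 < g := Nat.gcd_pos_of_pos_left _ hq0
  set d : ℕ := q / g with hd
  have hdg : d * g = q := Nat.div_mul_cancel (Nat.gcd_dvd_left _ _)
  have hdpos : 0 < d := Nat.div_pos (Nat.le_of_dvd hq0 (Nat.gcd_dvd_left _ _)) hgpos
  set e : ℕ := 2 * x.natAbs / g with he
  have heg : g * e = 2 * x.natAbs := Nat.mul_div_cancel' (Nat.gcd_dvd_right _ _)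
  have hcop : Nat.Coprime d e := Nat.coprime_div_gcd_div_gcd hgpos
  have hgcd : Int.gcd (q : ℤ) x = Nat.gcd q x.natAbs := by
    simp [Int.gcd, Int.natAbs_natCast]
  have hgle : g ≤ 2 * Int.gcd (q : ℤ) x := by
    rw [hgcd]
    refine Nat.le_of_dvd (Nat.mul_pos two_pos (Nat.gcd_pos_of_pos_left _ hq0)) ?_
    have : (2 : ℕ) * Nat.gcd q x.natAbs = Nat.gcd (2 * q) (2 * x.natAbs) :=
      (Nat.gcd_mul_left 2 q x.natAbs).symm
    rw [this]
    exact Nat.dvd_gcd ((Nat.gcd_dvd_left _ _).trans (dvd_mul_left q 2))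
      (Nat.gcd_dvd_right _ _)
  have key : ∀ h : ZMod q, ((2 * a * x : ℤ) : ZMod q) * h = 0 → d ∣ h.val := by
    intro h hh
    have h2 : (q : ℤ) ∣ 2 * a * x * (h.val : ℤ) := by
      rw [← ZMod.intCast_zmod_eq_zero_iff_dvd]
      push_cast
      rw [ZMod.natCast_zmod_val]
      push_cast at hh
      linear_combination hh
    have hco : IsCoprime (q : ℤ) (a : ℤ) := by
      rw [Int.isCoprime_iff_gcd_eq_one]
      simpa [Int.gcd, Nat.gcd_comm] using ha
    have h3 : (q : ℤ) ∣ 2 * x * (h.val : ℤ) := by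
      refine hco.dvd_of_dvd_mul_left ?_
      rw [show (a:ℤ) * (2 * x * (h.val:ℤ)) = 2 * a * x * h.val by ring]; exact h2
    have h4 : q ∣ 2 * x.natAbs * h.val := by
      have := Int.natAbs_dvd_natAbs.2 h3
      simp only [Int.natAbs_mul, Int.natAbs_natCast, Int.natAbs_mul_self'] at this; exact this
    have h5 : g * d ∣ g * (e * h.val) := by
      rw [← mul_assoc, heg, mul_comm g d, hdg]
      exact h4
    have h6 : d ∣ e * h.val := (mul_dvd_mul_iff_left (by positivity : (g:ℕ) ≠ 0)).1 h5
    exact hcop.dvd_of_dvd_mul_left h6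
  refine le_trans (Finset.card_le_card_of_injOn (t := Finset.range (2 * Int.gcd (q:ℤ) x)) (fun h => h.val / d) ?_ ?_) ?_
  · intro h hh
    simp only [Finset.mem_coe, Finset.mem_filter, Finset.mem_univ, true_and] at hh
    have hd1 : h.val < d * g := by rw [hdg]; exact ZMod.val_lt h
    have : h.val / d < g := Nat.div_lt_iff_lt_mul hdpos |>.2 (by rw [mul_comm g d]; exact hd1)
    exact Finset.mem_range.2 (lt_of_lt_of_le this hgle)
  · intro h1 hh1 h2 hh2 hval
    dsimp only at hval
    simp only [Finset.mem_coe, Finset.mem_filter, Finset.mem_univ, true_and] at hh1 hh2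
    have e1 : h1.val = d * (h1.val / d) := (Nat.mul_div_cancel' (key _ hh1)).symm
    have e2 : h2.val = d * (h2.val / d) := (Nat.mul_div_cancel' (key _ hh2)).symm
    have : h1.val = h2.val := by rw [e1, e2, hval]
    have := congrArg (fun n : ℕ => (n : ZMod q)) this
    simpa [ZMod.natCast_val, ZMod.cast_id] using this
  · simp


end GaussSumAux

open Finset AddChar in

theorem gauss_sum_bound (a q : ℕ) (x : ℤ) (hq : 0 < q) (ha : Nat.Coprime a q)
    (hx : x ≠ 0) :
    ‖∑ b ∈ Finset.range q,
        Complex.exp (2 * Real.pi * Complex.I * ((a : ℂ) * (x : ℂ) * (b : ℂ) ^ 2) / q)‖ ≤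
      2 * Real.sqrt q * Real.sqrt (Int.gcd q x) := by
  classical
  haveI : NeZero q := ⟨hq.ne'⟩
  set m : ZMod q := ((a * x : ℤ) : ZMod q) with hm
  set S : ℂ := ∑ b : ZMod q, ZMod.stdAddChar (m * (b : ZMod q) ^ 2) with hS
  have hsum : (∑ b ∈ Finset.range q,
      Complex.exp (2 * Real.pi * Complex.I * ((a : ℂ) * (x : ℂ) * (b : ℂ) ^ 2) / q)) = S := by
    rw [hS, ← sum_range_eq_sum_zmod q (fun b => ZMod.stdAddChar (m * b ^ 2))]
    refine Finset.sum_congr rfl fun b _ => ?_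
    have h1 : m * (b : ZMod q) ^ 2 = (((a : ℤ) * x * (b : ℤ) ^ 2 : ℤ) : ZMod q) := by
      rw [hm]; push_cast; ring
    rw [h1, ZMod.stdAddChar_coe]
    push_cast
    ring_nf
  rw [hsum]
  -- The count set
  set K := Finset.univ.filter
      (fun h : ZMod q => ((2 * a * x : ℤ) : ZMod q) * h = 0) with hK
  have hcond : ∀ h : ZMod q, (2 * m * h = 0) ↔ (((2 * a * x : ℤ) : ZMod q) * h = 0) := by
    intro h
    have : ((2 * a * x : ℤ) : ZMod q) = 2 * m := by rw [hm]; push_cast; ring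
    rw [this]
  have hsq : ‖S‖ ^ 2 ≤ (K.card : ℝ) * q := by
    have h1 : ‖S‖ ^ 2 = ‖S * (starRingEnd ℂ) S‖ := by
      rw [norm_mul, RCLike.norm_conj, sq]
    rw [h1, sq_eq m]
    refine le_trans (norm_sum_le _ _) ?_
    have h2 : ∀ h : ZMod q,
        ‖ZMod.stdAddChar (m * h ^ 2) * (if 2 * m * h = 0 then (q : ℂ) else 0)‖
          = if ((2 * a * x : ℤ) : ZMod q) * h = 0 then (q : ℝ) else 0 := by
      intro h
      rw [norm_mul, norm_stdAddChar, one_mul]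
      simp only [hcond h]
      split_ifs <;> simp
    rw [Finset.sum_congr rfl fun h _ => h2 h]
    rw [← Finset.sum_filter, ← hK, Finset.sum_const, nsmul_eq_mul]
  have hcard : (K.card : ℝ) ≤ 2 * (Int.gcd (q : ℤ) x : ℝ) := by
    have := count_le a q x ha
    rw [hK]
    exact_mod_cast this
  have hq0 : (0 : ℝ) ≤ (q : ℝ) := Nat.cast_nonneg q
  have hG : (0 : ℝ) ≤ ((Int.gcd (q : ℤ) x : ℕ) : ℝ) := Nat.cast_nonneg _
  have hfinal : ‖S‖ ^ 2 ≤ 2 * (Int.gcd (q : ℤ) x : ℝ) * q :=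
    le_trans hsq (mul_le_mul_of_nonneg_right hcard hq0)
  nlinarith [Real.sq_sqrt hq0, Real.sq_sqrt hG, Real.sqrt_nonneg ((q : ℕ) : ℝ),
    Real.sqrt_nonneg (((Int.gcd (q : ℤ) x : ℕ)) : ℝ), norm_nonneg S,
    mul_nonneg (Real.sqrt_nonneg ((q : ℕ) : ℝ)) (Real.sqrt_nonneg (((Int.gcd (q : ℤ) x : ℕ)) : ℝ)),
    sq_nonneg (2 * Real.sqrt q * Real.sqrt (Int.gcd (q : ℤ) x) - ‖S‖)]
end

section
/- For a nonzero integer $x$, real $P \ge 1$, and $T_x(\alpha) = \sum_{|y| \le P} e^{2\pi i \alpha x y^2}$, one has $\int_0^1 |T_x(\alpha)|^4\, d\alpha \ll_\varepsilon P^{2+\varepsilon}$ for every $\varepsilon > 0$, with implied constant independent of $x$. -/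
open MeasureTheory intervalIntegral


lemma orth (k : ℤ) : (∫ α in (0:ℝ)..1, Complex.exp (2 * Real.pi * Complex.I * (k * α))) =
    if k = 0 then 1 else 0 := by
  rcases eq_or_ne k 0 with hk | hk
  · simp [hk]
  · rw [if_neg hk]
    have hc : (2 * Real.pi * Complex.I * k) ≠ 0 := by
      simp [Real.pi_ne_zero, Complex.I_ne_zero, hk]
    have := integral_exp_mul_complex (a := (0:ℝ)) (b := 1) hc
    have h2 : ∀ α : ℝ, (2 * Real.pi * Complex.I * k) * α = 2 * Real.pi * Complex.I * (k * α) := by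
      intro α; ring
    simp_rw [h2] at this
    rw [this]
    simp [Complex.exp_int_mul_two_pi_mul_I]
    left
    rw [show ((2:ℂ) * Real.pi * Complex.I * k) = k * (2 * Real.pi * Complex.I) by ring]
    simp [Complex.exp_int_mul_two_pi_mul_I]

lemma expand (x : ℤ) (N : ℤ) :
    (∫ α in (0:ℝ)..1,
        ‖∑ y ∈ Finset.Icc (-N) N,
          Complex.exp (2 * Real.pi * Complex.I * (α * (x : ℝ) * (y : ℝ) ^ 2))‖ ^ 4) =
    ((((Finset.Icc (-N) N ×ˢ Finset.Icc (-N) N) ×ˢ (Finset.Icc (-N) N ×ˢ Finset.Icc (-N) N)).filter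
      (fun q => x * (q.1.1^2 - q.1.2^2 + q.2.1^2 - q.2.2^2) = 0)).card : ℝ) := by
  set I := Finset.Icc (-N) N
  set f : ℝ → ℂ := fun α => ∑ y ∈ I,
      Complex.exp (2 * Real.pi * Complex.I * (α * (x : ℝ) * (y : ℝ) ^ 2)) with hf
  have key : ∀ α : ℝ, ((‖f α‖ ^ 4 : ℝ) : ℂ) =
      ∑ q ∈ (I ×ˢ I) ×ˢ (I ×ˢ I),
        Complex.exp (2 * Real.pi * Complex.I *
          ((x * (q.1.1^2 - q.1.2^2 + q.2.1^2 - q.2.2^2) : ℤ) * α)) := by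
    intro α
    have h1 : ((‖f α‖ ^ 4 : ℝ) : ℂ) = (f α * (starRingEnd ℂ) (f α)) ^ 2 := by
      rw [Complex.mul_conj, Complex.normSq_eq_norm_sq]
      push_cast
      ring
    rw [h1, hf]
    simp only
    rw [map_sum, Finset.sum_mul_sum, ← Finset.sum_product', sq, Finset.sum_mul_sum,
      ← Finset.sum_product']
    apply Finset.sum_congr rfl
    intro q _
    simp only [← Complex.exp_conj, map_mul, map_pow, map_ofNat, Complex.conj_I, Complex.conj_ofReal,
      ← Complex.exp_add]
    congr 1
    push_cast
    ring
  -- integrate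
  have hint : ∀ k : ℤ, IntervalIntegrable
      (fun α : ℝ => Complex.exp (2 * Real.pi * Complex.I * ((k : ℂ) * α))) volume 0 1 := by
    intro k
    apply Continuous.intervalIntegrable
    continuity
  have h2 : (∫ α in (0:ℝ)..1, ((‖f α‖ ^ 4 : ℝ) : ℂ)) =
      ∑ q ∈ (I ×ˢ I) ×ˢ (I ×ˢ I),
        (if (x * (q.1.1^2 - q.1.2^2 + q.2.1^2 - q.2.2^2) : ℤ) = 0 then (1:ℂ) else 0) := by
    rw [intervalIntegral.integral_congr (g := fun α => ∑ q ∈ (I ×ˢ I) ×ˢ (I ×ˢ I),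
        Complex.exp (2 * Real.pi * Complex.I *
          ((x * (q.1.1^2 - q.1.2^2 + q.2.1^2 - q.2.2^2) : ℤ) * α)))
      (fun α _ => key α)]
    rw [intervalIntegral.integral_finset_sum (fun q _ => hint _)]
    exact Finset.sum_congr rfl fun q _ => orth _
  rw [intervalIntegral.integral_ofReal] at h2
  have h3 : ∑ q ∈ (I ×ˢ I) ×ˢ (I ×ˢ I),
      (if (x * (q.1.1^2 - q.1.2^2 + q.2.1^2 - q.2.2^2) : ℤ) = 0 then (1:ℂ) else 0)
      = ((((I ×ˢ I) ×ˢ (I ×ˢ I)).filter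
        (fun q => x * (q.1.1^2 - q.1.2^2 + q.2.1^2 - q.2.2^2) = 0)).card : ℂ) := by
    simp [Finset.sum_boole]
  rw [h3] at h2
  have h4 : (∫ α in (0:ℝ)..1, ‖f α‖ ^ 4) = ((((I ×ˢ I) ×ˢ (I ×ˢ I)).filter
      (fun q => x * (q.1.1^2 - q.1.2^2 + q.2.1^2 - q.2.2^2) = 0)).card : ℝ) := by
    exact_mod_cast h2
  exact h4

noncomputable def H (M : ℕ) : ℝ := ∑ k ∈ Finset.Icc 1 M, (1 / k : ℝ)

lemma H_nonneg (M : ℕ) : 0 ≤ H M := by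
  apply Finset.sum_nonneg; intro i _; positivity

lemma H_le (M : ℕ) : H M ≤ 1 + Real.log M := by
  have h1 : H M = (harmonic M : ℝ) := by
    rw [H, harmonic]
    push_cast
    rw [show Finset.Icc 1 M = Finset.Ico 1 (M+1) by rfl, Finset.sum_Ico_eq_sum_range]
    simp [one_div, add_comm]
  rw [h1]; exact harmonic_le_one_add_log M

lemma H_mono {M M' : ℕ} (h : M ≤ M') : H M ≤ H M' := by
  apply Finset.sum_le_sum_of_subset_of_nonneg (Finset.Icc_subset_Icc_right h)
  intro i _ _; positivity

-- number of multiples of L in [1, M]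
lemma mult_count (M L : ℕ) (hL : 1 ≤ L) :
    ((((Finset.Icc 1 M).filter (fun n => L ∣ n)).card : ℝ)) ≤ (M : ℝ) / L := by
  have : (Finset.Icc 1 M).filter (fun n => L ∣ n) = (Finset.Ioc 0 M).filter (fun n => L ∣ n) := by
    congr 1
  rw [this, Nat.Ioc_filter_dvd_card_eq_div]
  exact Nat.cast_div_le

lemma filter_mult_eq_image (M g : ℕ) (hg : 1 ≤ g) :
    (Finset.Icc 1 M).filter (fun a => g ∣ a) = (Finset.Icc 1 (M / g)).image (fun j => g * j) := by
  ext a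
  simp only [Finset.mem_filter, Finset.mem_Icc, Finset.mem_image]
  constructor
  · rintro ⟨⟨h1, h2⟩, j, rfl⟩
    have hj1 : 1 ≤ j := by
      rcases Nat.eq_zero_or_pos j with h | h
      · subst h; simp at h1
      · exact h
    exact ⟨j, ⟨hj1, (Nat.le_div_iff_mul_le (by omega)).mpr
      (by rw [Nat.mul_comm]; exact h2)⟩, rfl⟩
  · rintro ⟨j, ⟨h1, h2⟩, rfl⟩
    have := (Nat.le_div_iff_mul_le (by omega : 0 < g)).mp h2
    exact ⟨⟨Nat.one_le_iff_ne_zero.mpr (Nat.mul_ne_zero (by omega) (by omega)),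
      by rw [Nat.mul_comm]; exact this⟩, dvd_mul_right g j⟩

lemma inv_sum_mult (M g : ℕ) (hg : 1 ≤ g) :
    ∑ a ∈ (Finset.Icc 1 M).filter (fun a => g ∣ a), (1 / a : ℝ) ≤ (1 / g) * H M := by
  rw [filter_mult_eq_image M g hg]
  rw [Finset.sum_image (by intro a _ b _ h; exact Nat.eq_of_mul_eq_mul_left (by omega) h)]
  have hc : ∀ j ∈ Finset.Icc 1 (M / g), (1 / (g * j : ℕ) : ℝ) = (1/g) * (1/j) := by
    intro j hj; push_cast; rw [one_div_mul_eq_div, div_div]; ring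
  rw [Finset.sum_congr rfl hc, ← Finset.mul_sum]
  have h2 : H (M / g) ≤ H M := H_mono (Nat.div_le_self M g)
  have hg0 : (0:ℝ) < 1 / g := by positivity
  exact mul_le_mul_of_nonneg_left h2 hg0.le

lemma gcd_sum (M : ℕ) :
    ∑ p ∈ (Finset.Icc 1 M) ×ˢ (Finset.Icc 1 M), ((Nat.gcd p.1 p.2 : ℝ) / (p.1 * p.2))
      ≤ H M ^ 3 := by
  set s := (Finset.Icc 1 M) ×ˢ (Finset.Icc 1 M) with hs
  have hmaps : ∀ p ∈ s, Nat.gcd p.1 p.2 ∈ Finset.Icc 1 M := by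
    intro p hp
    rw [hs, Finset.mem_product] at hp
    simp only [Finset.mem_Icc] at *
    constructor
    · have h0 : p.1 ≠ 0 := by omega
      exact Nat.one_le_iff_ne_zero.mpr (fun h => h0 (Nat.eq_zero_of_gcd_eq_zero_left h))
    · exact le_trans (Nat.gcd_le_left _ (by omega)) hp.1.2
  rw [← Finset.sum_fiberwise_of_maps_to hmaps]
  have hinner : ∀ g ∈ Finset.Icc 1 M,
      (∑ p ∈ s.filter (fun p => Nat.gcd p.1 p.2 = g), ((Nat.gcd p.1 p.2 : ℝ) / (p.1 * p.2)))
        ≤ H M ^ 2 * (1 / g) := by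
    intro g hg
    simp only [Finset.mem_Icc] at hg
    have step1 : (∑ p ∈ s.filter (fun p => Nat.gcd p.1 p.2 = g),
        ((Nat.gcd p.1 p.2 : ℝ) / (p.1 * p.2)))
        ≤ ∑ p ∈ s.filter (fun p => g ∣ p.1 ∧ g ∣ p.2), ((g : ℝ) / (p.1 * p.2)) := by
      have heq : (∑ p ∈ s.filter (fun p => Nat.gcd p.1 p.2 = g),
          ((Nat.gcd p.1 p.2 : ℝ) / (p.1 * p.2)))
          = ∑ p ∈ s.filter (fun p => Nat.gcd p.1 p.2 = g), ((g:ℝ) / (p.1 * p.2)) := by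
        apply Finset.sum_congr rfl
        intro p hp
        simp only [Finset.mem_filter] at hp
        rw [hp.2]
      rw [heq]
      apply Finset.sum_le_sum_of_subset_of_nonneg
      · intro p hp
        simp only [Finset.mem_filter] at *
        exact ⟨hp.1, hp.2 ▸ Nat.gcd_dvd_left _ _, hp.2 ▸ Nat.gcd_dvd_right _ _⟩
      · intro p _ _; positivity
    have step2 : s.filter (fun p => g ∣ p.1 ∧ g ∣ p.2)
        = ((Finset.Icc 1 M).filter (fun a => g ∣ a)) ×ˢ ((Finset.Icc 1 M).filter (fun a => g ∣ a)) := by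
      rw [hs, Finset.filter_product]
    have step3 : (∑ p ∈ ((Finset.Icc 1 M).filter (fun a => g ∣ a)) ×ˢ
          ((Finset.Icc 1 M).filter (fun a => g ∣ a)), ((g : ℝ) / (p.1 * p.2)))
        = g * (∑ a ∈ (Finset.Icc 1 M).filter (fun a => g ∣ a), (1/a:ℝ)) ^ 2 := by
      rw [Finset.sum_product]
      have : ∀ a b : ℕ, ((g:ℝ) / (a * b)) = g * ((1/a) * (1/b)) := by
        intro a b; field_simp
      simp_rw [this, ← Finset.mul_sum, ← Finset.sum_mul, sq]
    have step4 : (g:ℝ) * (∑ a ∈ (Finset.Icc 1 M).filter (fun a => g ∣ a), (1/a:ℝ)) ^ 2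
        ≤ g * ((1/g) * H M) ^ 2 := by
      apply mul_le_mul_of_nonneg_left _ (by positivity)
      apply pow_le_pow_left₀ (Finset.sum_nonneg fun i _ => by positivity)
      exact inv_sum_mult M g hg.1
    have step5 : (g:ℝ) * ((1/g) * H M) ^ 2 = H M ^ 2 * (1/g) := by
      have hg0 : (g:ℝ) ≠ 0 := Nat.cast_ne_zero.mpr (by omega)
      field_simp
    calc _ ≤ _ := step1
    _ = _ := by rw [step2]
    _ = _ := step3
    _ ≤ _ := step4
    _ = _ := step5
  calc (∑ g ∈ Finset.Icc 1 M, ∑ p ∈ s.filter (fun p => Nat.gcd p.1 p.2 = g),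
          ((Nat.gcd p.1 p.2 : ℝ) / (p.1 * p.2)))
      ≤ ∑ g ∈ Finset.Icc 1 M, H M ^ 2 * (1 / g) := Finset.sum_le_sum hinner
    _ = H M ^ 2 * H M := by rw [← Finset.mul_sum]; rfl
    _ = H M ^ 3 := by ring

lemma divisors_eq_filter (M n : ℕ) (h1 : 1 ≤ n) (h2 : n ≤ M) :
    n.divisors = (Finset.Icc 1 M).filter (fun a => a ∣ n) := by
  ext a
  simp only [Nat.mem_divisors, Finset.mem_filter, Finset.mem_Icc]
  constructor
  · rintro ⟨ha, -⟩
    have ha0 : a ≠ 0 := by rintro rfl; rw [zero_dvd_iff] at ha; omega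
    exact ⟨⟨by omega, le_trans (Nat.le_of_dvd (by omega) ha) h2⟩, ha⟩
  · rintro ⟨-, ha⟩; exact ⟨ha, by omega⟩

lemma dsq_sum (M : ℕ) :
    (∑ n ∈ Finset.Icc 1 M, ((n.divisors.card : ℝ))^2) ≤ M * H M ^ 3 := by
  have key : ∀ n ∈ Finset.Icc 1 M, ((n.divisors.card : ℝ))^2 =
      ∑ p ∈ (Finset.Icc 1 M) ×ˢ (Finset.Icc 1 M),
        (if p.1 ∣ n ∧ p.2 ∣ n then (1:ℝ) else 0) := by
    intro n hn
    simp only [Finset.mem_Icc] at hn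
    rw [Finset.sum_boole, Finset.filter_product (fun a => a ∣ n) (fun b => b ∣ n), Finset.card_product,
      ← divisors_eq_filter M n hn.1 hn.2]
    push_cast; ring
  rw [Finset.sum_congr rfl key, Finset.sum_comm]
  have bound : ∀ p ∈ (Finset.Icc 1 M) ×ˢ (Finset.Icc 1 M),
      (∑ n ∈ Finset.Icc 1 M, if p.1 ∣ n ∧ p.2 ∣ n then (1:ℝ) else 0)
        ≤ M * ((Nat.gcd p.1 p.2 : ℝ) / (p.1 * p.2)) := by
    intro p hp
    simp only [Finset.mem_product, Finset.mem_Icc] at hp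
    obtain ⟨⟨ha1, ha2⟩, ⟨hb1, hb2⟩⟩ := hp
    have hdvd : ∀ n : ℕ, (p.1 ∣ n ∧ p.2 ∣ n) ↔ Nat.lcm p.1 p.2 ∣ n := by
      intro n; exact (Nat.lcm_dvd_iff).symm
    simp_rw [hdvd]
    rw [Finset.sum_boole]
    have hL : 1 ≤ Nat.lcm p.1 p.2 :=
      Nat.one_le_iff_ne_zero.mpr (Nat.lcm_ne_zero (by omega) (by omega))
    refine le_trans (mult_count M _ hL) (le_of_eq ?_)
    have hgl : (Nat.gcd p.1 p.2 : ℝ) * (Nat.lcm p.1 p.2 : ℝ) = (p.1 : ℝ) * p.2 := by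
      exact_mod_cast congrArg (Nat.cast : ℕ → ℝ) (Nat.gcd_mul_lcm p.1 p.2)
    have hL0 : (Nat.lcm p.1 p.2 : ℝ) ≠ 0 := by positivity
    have ha0 : (p.1:ℝ) ≠ 0 := Nat.cast_ne_zero.mpr (by omega)
    have hb0 : (p.2:ℝ) ≠ 0 := Nat.cast_ne_zero.mpr (by omega)
    field_simp
    nlinarith [hgl]
  refine le_trans (Finset.sum_le_sum bound) ?_
  rw [← Finset.mul_sum]
  exact mul_le_mul_of_nonneg_left (gcd_sum M) (by positivity)

-- fiber bound: pairs with product m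
lemma fiber_two (Q m : ℤ) (hm : m ≠ 0) :
    ((Finset.Icc (-Q) Q ×ˢ Finset.Icc (-Q) Q).filter (fun p => p.1 * p.2 = m)).card
      ≤ 2 * m.natAbs.divisors.card := by
  apply Finset.card_le_mul_card_image_of_maps_to (f := fun p => p.1.natAbs)
  · intro p hp
    simp only [Finset.mem_filter] at hp
    rw [Nat.mem_divisors]
    refine ⟨Int.natAbs_dvd_natAbs.mpr ⟨p.2, hp.2.symm⟩, Int.natAbs_ne_zero.mpr hm⟩
  · intro k _
    have hsub : ((Finset.Icc (-Q) Q ×ˢ Finset.Icc (-Q) Q).filter (fun p => p.1 * p.2 = m)).filter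
        (fun p => p.1.natAbs = k) ⊆ {((k : ℤ), m / (k:ℤ)), (-(k:ℤ), m / (-(k:ℤ)))} := by
      intro p hp
      simp only [Finset.mem_filter] at hp
      obtain ⟨⟨-, hprod⟩, habs⟩ := hp
      have h1 : p.1 ≠ 0 := by rintro h; rw [h, zero_mul] at hprod; exact hm hprod.symm
      have h2 : p.2 = m / p.1 := by rw [← hprod, Int.mul_ediv_cancel_left _ h1]
      have h3 : p.1 = (k:ℤ) ∨ p.1 = -(k:ℤ) := by
        rcases Int.natAbs_eq p.1 with h | h
        · left; rw [h, habs]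
        · right; rw [h, habs]
      simp only [Finset.mem_insert, Finset.mem_singleton]
      rcases h3 with h | h
      · left; rw [Prod.ext_iff]; exact ⟨h, by rw [h2, h]⟩
      · right; rw [Prod.ext_iff]; exact ⟨h, by rw [h2, h]⟩
    refine le_trans (Finset.card_le_card hsub) ?_
    refine le_trans (Finset.card_insert_le _ _) ?_
    simp

-- reindex: Icc (1:ℤ) M = image of Icc 1 M.toNat
lemma icc_pos_image (M : ℕ) :
    Finset.Icc (1:ℤ) (M:ℤ) = (Finset.Icc 1 M).image (fun n : ℕ => (n:ℤ)) := by
  ext k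
  simp only [Finset.mem_Icc, Finset.mem_image]
  constructor
  · intro h
    exact ⟨k.toNat, by omega, by omega⟩
  · rintro ⟨n, hn, rfl⟩; omega

lemma icc_neg_image (M : ℕ) :
    Finset.Icc (-(M:ℤ)) (-1) = (Finset.Icc 1 M).image (fun n : ℕ => -(n:ℤ)) := by
  ext k
  simp only [Finset.mem_Icc, Finset.mem_image]
  constructor
  · intro h
    exact ⟨(-k).toNat, by omega, by omega⟩
  · rintro ⟨n, hn, rfl⟩; omega

lemma sum_K (M : ℕ) (g : ℕ → ℕ) :
    (∑ m ∈ (Finset.Icc (-(M:ℤ)) (M:ℤ)).erase 0, g m.natAbs)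
      = 2 * ∑ n ∈ Finset.Icc 1 M, g n := by
  have hsplit : (Finset.Icc (-(M:ℤ)) (M:ℤ)).erase 0
      = Finset.Icc (-(M:ℤ)) (-1) ∪ Finset.Icc (1:ℤ) (M:ℤ) := by
    ext k
    simp only [Finset.mem_erase, Finset.mem_Icc, Finset.mem_union]
    omega
  have hdisj : Disjoint (Finset.Icc (-(M:ℤ)) (-1)) (Finset.Icc (1:ℤ) (M:ℤ)) := by
    rw [Finset.disjoint_left]
    intro k h1 h2
    simp only [Finset.mem_Icc] at h1 h2
    omega
  rw [hsplit, Finset.sum_union hdisj, icc_pos_image, icc_neg_image,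
    Finset.sum_image (by intro a _ b _ h; simpa using h),
    Finset.sum_image (by intro a _ b _ h; simpa using h)]
  simp only [Int.natAbs_neg, Int.natAbs_natCast]
  ring

-- the S1 bound
lemma S1_bound (N : ℤ) (hN : 1 ≤ N) :
    (((Finset.Icc (-(2*N)) (2*N) ×ˢ Finset.Icc (-(2*N)) (2*N)) ×ˢ
        (Finset.Icc (-(2*N)) (2*N) ×ˢ Finset.Icc (-(2*N)) (2*N))).filter
      (fun r => r.1.1 * r.1.2 = r.2.1 * r.2.2 ∧ r.1.1 * r.1.2 ≠ 0)).card
      ≤ 8 * ∑ n ∈ Finset.Icc 1 ((2*N)^2).toNat, (n.divisors.card)^2 := by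
  set Q : ℤ := 2*N with hQ
  set J := Finset.Icc (-Q) Q with hJ
  set M : ℕ := (Q^2).toNat with hM
  set S₁ := (((J ×ˢ J) ×ˢ (J ×ˢ J)).filter
      (fun r => r.1.1 * r.1.2 = r.2.1 * r.2.2 ∧ r.1.1 * r.1.2 ≠ 0)) with hS
  have hmaps : ∀ r ∈ S₁, r.1.1 * r.1.2 ∈ (Finset.Icc (-(M:ℤ)) (M:ℤ)).erase 0 := by
    intro r hr
    simp only [hS, Finset.mem_filter, Finset.mem_product, hJ, Finset.mem_Icc] at hr
    obtain ⟨⟨⟨⟨h1, h2⟩, h3, h4⟩, -⟩, -, hne⟩ := hr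
    have habs : |r.1.1 * r.1.2| ≤ Q^2 := by
      rw [abs_mul, sq]
      have := abs_le.mpr ⟨h1, h2⟩
      have := abs_le.mpr ⟨h3, h4⟩
      apply mul_le_mul <;> [skip; skip; positivity; omega] <;> assumption
    rw [Finset.mem_erase, Finset.mem_Icc]
    have hMQ : (M:ℤ) = Q^2 := by rw [hM]; exact Int.toNat_of_nonneg (sq_nonneg Q)
    rw [hMQ]
    constructor
    · exact hne
    · constructor <;> [exact neg_le_of_abs_le habs; exact le_of_abs_le habs]
  rw [Finset.card_eq_sum_card_fiberwise hmaps]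
  have hfiber : ∀ m ∈ (Finset.Icc (-(M:ℤ)) (M:ℤ)).erase 0,
      (S₁.filter (fun r => r.1.1 * r.1.2 = m)).card ≤ (2 * m.natAbs.divisors.card)^2 := by
    intro m hm
    simp only [Finset.mem_erase] at hm
    have hsub : S₁.filter (fun r => r.1.1 * r.1.2 = m) ⊆
        ((J ×ˢ J).filter (fun p => p.1 * p.2 = m)) ×ˢ
        ((J ×ˢ J).filter (fun p => p.1 * p.2 = m)) := by
      intro r hr
      simp only [hS, Finset.mem_filter, Finset.mem_product] at hr ⊢
      obtain ⟨⟨⟨hr1, hr2⟩, heq, -⟩, hm'⟩ := hr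
      exact ⟨⟨hr1, hm'⟩, hr2, heq ▸ hm'⟩
    refine le_trans (Finset.card_le_card hsub) ?_
    rw [Finset.card_product, sq]
    have := fiber_two Q m hm.1
    exact Nat.mul_le_mul this this
  refine le_trans (Finset.sum_le_sum hfiber) ?_
  rw [sum_K M (fun n => (2 * n.divisors.card)^2)]
  have : ∀ n ∈ Finset.Icc 1 M, (2 * n.divisors.card)^2 = 4 * (n.divisors.card)^2 := by
    intro n _; ring
  rw [Finset.sum_congr rfl this, ← Finset.mul_sum]
  omega

lemma Z_card (Q : ℤ) :
    ((Finset.Icc (-Q) Q ×ˢ Finset.Icc (-Q) Q).filter (fun p => p.1 * p.2 = 0)).card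
      ≤ 2 * (Finset.Icc (-Q) Q).card := by
  set J := Finset.Icc (-Q) Q with hJ
  have hsub : (J ×ˢ J).filter (fun p => p.1 * p.2 = 0) ⊆
      (({0} : Finset ℤ) ×ˢ J) ∪ (J ×ˢ ({0} : Finset ℤ)) := by
    intro p hp
    simp only [Finset.mem_filter, Finset.mem_product, Finset.mem_union,
      Finset.mem_singleton] at hp ⊢
    rcases mul_eq_zero.mp hp.2 with h | h
    · exact Or.inl ⟨h, hp.1.2⟩
    · exact Or.inr ⟨hp.1.1, h⟩
  refine le_trans (Finset.card_le_card hsub) (le_trans (Finset.card_union_le _ _) ?_)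
  rw [Finset.card_product, Finset.card_product]
  simp [two_mul]

lemma S0_bound (N : ℤ) (hN : 1 ≤ N) :
    (((Finset.Icc (-(2*N)) (2*N) ×ˢ Finset.Icc (-(2*N)) (2*N)) ×ˢ
        (Finset.Icc (-(2*N)) (2*N) ×ˢ Finset.Icc (-(2*N)) (2*N))).filter
      (fun r => r.1.1 * r.1.2 = r.2.1 * r.2.2 ∧ r.1.1 * r.1.2 = 0)).card
      ≤ 100 * N.toNat ^ 2 := by
  set Q : ℤ := 2*N with hQ
  set J := Finset.Icc (-Q) Q with hJ
  set Z := (J ×ˢ J).filter (fun p => p.1 * p.2 = 0) with hZ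
  have hsub : (((J ×ˢ J) ×ˢ (J ×ˢ J)).filter
      (fun r => r.1.1 * r.1.2 = r.2.1 * r.2.2 ∧ r.1.1 * r.1.2 = 0)) ⊆ Z ×ˢ Z := by
    intro r hr
    simp only [hZ, Finset.mem_filter, Finset.mem_product] at hr ⊢
    obtain ⟨⟨h1, h2⟩, heq, h0⟩ := hr
    exact ⟨⟨h1, h0⟩, h2, heq ▸ h0⟩
  refine le_trans (Finset.card_le_card hsub) ?_
  rw [Finset.card_product]
  have hZc : Z.card ≤ 2 * J.card := Z_card Q
  have hJc : J.card ≤ 5 * N.toNat := by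
    rw [hJ, Int.card_Icc]
    omega
  calc Z.card * Z.card ≤ (2 * J.card) * (2 * J.card) := Nat.mul_le_mul hZc hZc
    _ ≤ (2 * (5 * N.toNat)) * (2 * (5 * N.toNat)) := by
        have := Nat.mul_le_mul_left 2 hJc
        exact Nat.mul_le_mul this this
    _ = 100 * N.toNat ^ 2 := by ring

lemma inj_bound (x N : ℤ) (hx : x ≠ 0) :
    (((Finset.Icc (-N) N ×ˢ Finset.Icc (-N) N) ×ˢ (Finset.Icc (-N) N ×ˢ Finset.Icc (-N) N)).filter
      (fun q => x * (q.1.1^2 - q.1.2^2 + q.2.1^2 - q.2.2^2) = 0)).card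
    ≤ (((Finset.Icc (-(2*N)) (2*N) ×ˢ Finset.Icc (-(2*N)) (2*N)) ×ˢ
        (Finset.Icc (-(2*N)) (2*N) ×ˢ Finset.Icc (-(2*N)) (2*N))).filter
      (fun r => r.1.1 * r.1.2 = r.2.1 * r.2.2)).card := by
  apply Finset.card_le_card_of_injOn
    (fun q => ((q.1.1 - q.1.2, q.1.1 + q.1.2), (q.2.2 - q.2.1, q.2.2 + q.2.1)))
  · intro q hq
    simp only [Finset.mem_coe, Finset.mem_filter, Finset.mem_product, Finset.mem_Icc] at hq ⊢
    obtain ⟨⟨⟨⟨ha1, ha2⟩, hb1, hb2⟩, ⟨hc1, hc2⟩, hd1, hd2⟩, heq⟩ := hq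
    have h0 : q.1.1^2 - q.1.2^2 + q.2.1^2 - q.2.2^2 = 0 := by
      rcases mul_eq_zero.mp heq with h | h
      · exact absurd h hx
      · exact h
    refine ⟨⟨⟨⟨by omega, by omega⟩, by omega, by omega⟩, ⟨by omega, by omega⟩, by omega, by omega⟩, ?_⟩
    linear_combination h0
  · intro q hq q' hq' h
    simp only [Prod.ext_iff] at h ⊢
    obtain ⟨⟨h1, h2⟩, h3, h4⟩ := h
    exact ⟨⟨by omega, by omega⟩, by omega, by omega⟩

lemma count_main (x N : ℤ) (hx : x ≠ 0) (hN : 1 ≤ N) :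
    ((((Finset.Icc (-N) N ×ˢ Finset.Icc (-N) N) ×ˢ
        (Finset.Icc (-N) N ×ˢ Finset.Icc (-N) N)).filter
      (fun q => x * (q.1.1^2 - q.1.2^2 + q.2.1^2 - q.2.2^2) = 0)).card : ℝ)
      ≤ 100 * (N:ℝ)^2 + 8 * ∑ n ∈ Finset.Icc 1 ((2*N)^2).toNat, ((n.divisors.card : ℝ))^2 := by
  have hsplit : (((Finset.Icc (-(2*N)) (2*N) ×ˢ Finset.Icc (-(2*N)) (2*N)) ×ˢ
        (Finset.Icc (-(2*N)) (2*N) ×ˢ Finset.Icc (-(2*N)) (2*N))).filter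
      (fun r => r.1.1 * r.1.2 = r.2.1 * r.2.2)).card
      = (((Finset.Icc (-(2*N)) (2*N) ×ˢ Finset.Icc (-(2*N)) (2*N)) ×ˢ
        (Finset.Icc (-(2*N)) (2*N) ×ˢ Finset.Icc (-(2*N)) (2*N))).filter
      (fun r => r.1.1 * r.1.2 = r.2.1 * r.2.2 ∧ r.1.1 * r.1.2 = 0)).card
      + (((Finset.Icc (-(2*N)) (2*N) ×ˢ Finset.Icc (-(2*N)) (2*N)) ×ˢ
        (Finset.Icc (-(2*N)) (2*N) ×ˢ Finset.Icc (-(2*N)) (2*N))).filter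
      (fun r => r.1.1 * r.1.2 = r.2.1 * r.2.2 ∧ r.1.1 * r.1.2 ≠ 0)).card := by
    rw [← Finset.filter_filter, ← Finset.filter_filter]
    exact (Finset.card_filter_add_card_filter_not
      (p := fun r : (ℤ × ℤ) × (ℤ × ℤ) => r.1.1 * r.1.2 = 0)).symm
  have h1 := inj_bound x N hx
  have h2 := S0_bound N hN
  have h3 := S1_bound N hN
  have hcount : (((Finset.Icc (-N) N ×ˢ Finset.Icc (-N) N) ×ˢ
        (Finset.Icc (-N) N ×ˢ Finset.Icc (-N) N)).filter
      (fun q => x * (q.1.1^2 - q.1.2^2 + q.2.1^2 - q.2.2^2) = 0)).card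
      ≤ 100 * N.toNat ^ 2 + 8 * ∑ n ∈ Finset.Icc 1 ((2*N)^2).toNat, (n.divisors.card)^2 :=
    le_trans h1 (le_trans (le_of_eq hsplit) (Nat.add_le_add h2 h3))
  have hNN : ((N.toNat : ℝ)) = (N : ℝ) := by
    rw [show ((N.toNat : ℝ)) = ((N.toNat : ℤ) : ℝ) by push_cast; ring]
    congr 1
    omega
  have hc : ((((Finset.Icc (-N) N ×ˢ Finset.Icc (-N) N) ×ˢ
        (Finset.Icc (-N) N ×ˢ Finset.Icc (-N) N)).filter
      (fun q => x * (q.1.1^2 - q.1.2^2 + q.2.1^2 - q.2.2^2) = 0)).card : ℝ)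
      ≤ ((100 * N.toNat ^ 2 + 8 * ∑ n ∈ Finset.Icc 1 ((2*N)^2).toNat,
          (n.divisors.card)^2 : ℕ) : ℝ) := by exact_mod_cast hcount
  refine hc.trans (le_of_eq ?_)
  push_cast [hNN]
  ring

-- log glue
lemma log_glue (ε P : ℝ) (hε : 0 < ε) (hP : 1 ≤ P) (M : ℕ) (hM : (M:ℝ) ≤ 4 * P^2) :
    (M:ℝ) * (1 + Real.log M)^3 ≤ 4 * (3 + 6/ε)^3 * P^((2:ℝ)+ε) := by
  have hP0 : (0:ℝ) < P := by linarith
  have hlogP : Real.log P ≤ (3/ε) * P^(ε/3) := by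
    have h1 : Real.log (P^(ε/3)) = (ε/3) * Real.log P := Real.log_rpow hP0 _
    have h2 : Real.log (P^(ε/3)) ≤ P^(ε/3) := by
      have := Real.log_le_sub_one_of_pos (Real.rpow_pos_of_pos hP0 (ε/3))
      linarith
    rw [h1] at h2
    rw [div_mul_eq_mul_div, le_div_iff₀ hε]
    nlinarith
  have hrp1 : (1:ℝ) ≤ P^(ε/3) := Real.one_le_rpow hP (by positivity)
  have hlogM : Real.log M ≤ 2 + 2 * Real.log P := by
    rcases Nat.eq_zero_or_pos M with h | h
    · simp [h]; nlinarith [Real.log_nonneg hP]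
    · have hM1 : (1:ℝ) ≤ (M:ℝ) := by exact_mod_cast h
      have := Real.log_le_log (by linarith) hM
      rw [Real.log_mul (by norm_num) (by positivity), Real.log_pow] at this
      have h4 : Real.log 4 ≤ 2 := by
        rw [show (4:ℝ) = 2*2 by norm_num, Real.log_mul (by norm_num) (by norm_num)]
        nlinarith [Real.log_le_sub_one_of_pos (by norm_num : (0:ℝ) < 2)]
      push_cast at this
      linarith
  have hkey : 1 + Real.log M ≤ (3 + 6/ε) * P^(ε/3) := by
    have : 1 + Real.log M ≤ 3 + 2 * Real.log P := by linarith
    have h2 : 3 + 2 * Real.log P ≤ 3 * P^(ε/3) + (6/ε) * P^(ε/3) := by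
      have he : (6/ε) * P^(ε/3) = 2 * ((3/ε) * P^(ε/3)) := by ring
      rw [he]
      linarith
    linarith [h2, this]
  have hnn : (0:ℝ) ≤ 1 + Real.log M := by
    rcases Nat.eq_zero_or_pos M with h | h
    · simp [h]
    · have hM1 : (1:ℝ) ≤ (M:ℝ) := by exact_mod_cast h
      have := Real.log_nonneg hM1
      linarith
  have hcube : (1 + Real.log M)^3 ≤ (3 + 6/ε)^3 * P^ε := by
    have h1 : (1 + Real.log M)^3 ≤ ((3 + 6/ε) * P^(ε/3))^3 := pow_le_pow_left₀ hnn hkey 3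
    have h2 : ((3 + 6/ε) * P^(ε/3))^3 = (3 + 6/ε)^3 * (P^(ε/3))^(3:ℕ) := by ring
    have h3 : (P^(ε/3))^(3:ℕ) = P^ε := by
      rw [← Real.rpow_natCast (P^(ε/3)) 3, ← Real.rpow_mul hP0.le]
      norm_num
    rw [h2, h3] at h1
    exact h1
  have hM0 : (0:ℝ) ≤ (M:ℝ) := Nat.cast_nonneg M
  have hPe : P^((2:ℝ)+ε) = P^2 * P^ε := by
    rw [Real.rpow_add hP0, Real.rpow_two]
  rw [hPe]
  calc (M:ℝ) * (1 + Real.log M)^3 ≤ (4*P^2) * ((3 + 6/ε)^3 * P^ε) := by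
        apply mul_le_mul hM hcube (by positivity) (by positivity)
    _ = 4 * (3 + 6/ε)^3 * (P^2 * P^ε) := by ring

theorem hua_with_coefficient : ∀ ε : ℝ, 0 < ε → ∃ C : ℝ, ∀ (x : ℤ) (P : ℝ),
    x ≠ 0 → 1 ≤ P →
    (∫ α in (0 : ℝ)..1,
        ‖∑ y ∈ Finset.Icc (-⌊P⌋) ⌊P⌋,
          Complex.exp (2 * Real.pi * Complex.I * (α * (x : ℝ) * (y : ℝ) ^ 2))‖ ^ 4) ≤
      C * P ^ ((2 : ℝ) + ε) := by
  intro ε hε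
  refine ⟨100 + 32 * (3 + 6/ε)^3, ?_⟩
  intro x P hx hP
  have hP0 : (0:ℝ) < P := by linarith
  have hN1 : (1:ℤ) ≤ ⌊P⌋ := Int.le_floor.mpr (by exact_mod_cast hP)
  have hNP : ((⌊P⌋:ℤ):ℝ) ≤ P := Int.floor_le P
  have hN0 : (0:ℝ) ≤ ((⌊P⌋:ℤ):ℝ) := by exact_mod_cast hN1.trans' (by norm_num)
  rw [expand x ⌊P⌋]
  refine le_trans (count_main x ⌊P⌋ hx hN1) ?_
  set M := ((2*⌊P⌋)^2).toNat with hM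
  have hMle : (M:ℝ) ≤ 4 * P^2 := by
    have : ((M:ℤ):ℝ) = ((2*⌊P⌋:ℤ):ℝ)^2 := by
      rw [hM]
      rw [Int.toNat_of_nonneg (sq_nonneg _)]
      push_cast; ring
    push_cast at this ⊢
    rw [this]
    nlinarith
  have hds : ∑ n ∈ Finset.Icc 1 M, ((n.divisors.card:ℝ))^2 ≤ (M:ℝ) * (1 + Real.log M)^3 := by
    refine le_trans (dsq_sum M) ?_
    apply mul_le_mul_of_nonneg_left _ (Nat.cast_nonneg M)
    exact pow_le_pow_left₀ (H_nonneg M) (H_le M) 3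
  have hglue := log_glue ε P hε hP M hMle
  have hP2 : P^(2:ℕ) ≤ P^((2:ℝ)+ε) := by
    rw [← Real.rpow_natCast P 2]
    exact Real.rpow_le_rpow_of_exponent_le hP (by push_cast; linarith)
  have hfloor2 : ((⌊P⌋:ℤ):ℝ)^2 ≤ P^(2:ℕ) := by
    exact pow_le_pow_left₀ hN0 hNP 2
  calc 100 * ((⌊P⌋:ℤ):ℝ)^2 + 8 * ∑ n ∈ Finset.Icc 1 M, ((n.divisors.card:ℝ))^2
      ≤ 100 * P^((2:ℝ)+ε) + 8 * (4 * (3 + 6/ε)^3 * P^((2:ℝ)+ε)) := by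
        have := hds.trans hglue
        have h100 : 100 * ((⌊P⌋:ℤ):ℝ)^2 ≤ 100 * P^((2:ℝ)+ε) :=
          mul_le_mul_of_nonneg_left (hfloor2.trans hP2) (by norm_num)
        linarith
    _ = (100 + 32 * (3 + 6/ε)^3) * P^((2:ℝ)+ε) := by ring
end

section
/- For any integer $q \ge 1$, real $X \ge 1$, and $\varepsilon > 0$, the number of positive integers $u \le X$ all of whose prime factors divide $q$ is $O_\varepsilon(X^\varepsilon q^\varepsilon)$. -/
open Finset Real ArithmeticFunction
open scoped ArithmeticFunction.zeta

noncomputable def rpowFun (ε : ℝ) : ArithmeticFunction ℝ :=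
  ⟨fun d => if d = 0 then 0 else (d : ℝ) ^ (-ε), by simp⟩

lemma rpowFun_apply (ε : ℝ) {d : ℕ} (hd : d ≠ 0) : rpowFun ε d = (d : ℝ) ^ (-ε) := by
  simp [rpowFun, hd]

lemma rpowFun_mult (ε : ℝ) : (rpowFun ε).IsMultiplicative := by
  constructor
  · simp [rpowFun]
  · intro m n _
    rcases eq_or_ne m 0 with rfl | hm
    · simp [rpowFun]
    rcases eq_or_ne n 0 with rfl | hn
    · simp [rpowFun]
    rw [rpowFun_apply ε (mul_ne_zero hm hn), rpowFun_apply ε hm, rpowFun_apply ε hn,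
      Nat.cast_mul, Real.mul_rpow (by positivity) (by positivity)]

lemma geom_bound {r : ℝ} (h0 : 0 ≤ r) (h1 : r < 1) (n : ℕ) :
    ∑ i ∈ Finset.range n, r ^ i ≤ (1 - r)⁻¹ := by
  have := Summable.sum_le_tsum (Finset.range n) (fun i _ => pow_nonneg h0 i)
    (summable_geometric_of_lt_one h0 h1)
  rwa [tsum_geometric_of_lt_one h0 h1] at this

lemma sum_div_le (ε : ℝ) (hε : 0 < ε) {n : ℕ} (hn : n ≠ 0) :
    ∑ d ∈ n.divisors, (d : ℝ) ^ (-ε) ≤ ∏ p ∈ n.primeFactors, (1 - (p : ℝ) ^ (-ε))⁻¹ := by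
  have hF : (↑(ζ : ArithmeticFunction ℕ) * rpowFun ε).IsMultiplicative :=
    isMultiplicative_zeta.natCast.mul (rpowFun_mult ε)
  have h1 : ∑ d ∈ n.divisors, (d : ℝ) ^ (-ε) = (↑(ζ : ArithmeticFunction ℕ) * rpowFun ε) n := by
    rw [coe_zeta_mul_apply]
    exact Finset.sum_congr rfl fun d hd =>
      (rpowFun_apply ε (Nat.pos_of_mem_divisors hd).ne').symm
  rw [h1, hF.multiplicative_factorization _ hn,
    Nat.prod_factorization_eq_prod_primeFactors]
  apply Finset.prod_le_prod
  · intro p hp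
    rw [coe_zeta_mul_apply]
    exact Finset.sum_nonneg fun d _ => by
      rcases eq_or_ne d 0 with rfl | hd
      · simp [rpowFun]
      · rw [rpowFun_apply ε hd]; positivity
  · intro p hp
    have hp' := Nat.prime_of_mem_primeFactors hp
    have hp1 : (1 : ℝ) < p := by exact_mod_cast hp'.one_lt
    have hr0 : (0 : ℝ) ≤ (p : ℝ) ^ (-ε) := Real.rpow_nonneg (by positivity) _
    have hr1 : (p : ℝ) ^ (-ε) < 1 := Real.rpow_lt_one_of_one_lt_of_neg hp1 (by linarith)
    rw [coe_zeta_mul_apply, Nat.sum_divisors_prime_pow hp']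
    have heq : ∀ i : ℕ, rpowFun ε (p ^ i) = ((p : ℝ) ^ (-ε)) ^ i := by
      intro i
      rw [rpowFun_apply ε (pow_ne_zero i hp'.ne_zero), Nat.cast_pow,
        ← Real.rpow_natCast ((p : ℝ) ^ (-ε)) i, ← Real.rpow_natCast (p : ℝ) i,
        ← Real.rpow_mul (by positivity), ← Real.rpow_mul (by positivity), mul_comm]
    simp only [heq]
    exact geom_bound hr0 hr1 _

lemma prod_bound (ε : ℝ) (hε : 0 < ε) (q : ℕ) (hq : 1 ≤ q) :
    ∏ p ∈ q.primeFactors, (1 - (p : ℝ) ^ (-ε))⁻¹ ≤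
      ((1 - (2:ℝ) ^ (-ε))⁻¹) ^ (⌈(2:ℝ) ^ (1/ε)⌉₊) * (q : ℝ) ^ ε := by
  classical
  set c : ℝ := (1 - (2:ℝ) ^ (-ε))⁻¹ with hc
  set T : ℕ := ⌈(2:ℝ) ^ (1/ε)⌉₊ with hT
  have h2 : (0:ℝ) ≤ (2:ℝ)^(-ε) := Real.rpow_nonneg (by norm_num) _
  have h2' : (2:ℝ)^(-ε) < 1 := Real.rpow_lt_one_of_one_lt_of_neg (by norm_num) (by linarith)
  have hc1 : 1 ≤ c := by
    rw [hc, one_le_inv_iff₀]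
    constructor <;> linarith
  -- basic facts about each factor
  have hfac : ∀ p ∈ q.primeFactors, (0:ℝ) < 1 - (p : ℝ) ^ (-ε) ∧ (1 - (p : ℝ) ^ (-ε))⁻¹ ≤ c := by
    intro p hp
    have hp2 : (2:ℝ) ≤ p := by exact_mod_cast (Nat.prime_of_mem_primeFactors hp).two_le
    have hle : (p:ℝ)^(-ε) ≤ (2:ℝ)^(-ε) := by
      rw [Real.rpow_neg (by linarith), Real.rpow_neg (by norm_num)]
      apply inv_anti₀ (Real.rpow_pos_of_pos (by norm_num) _)
      exact Real.rpow_le_rpow (by norm_num) hp2 hε.le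
    refine ⟨by linarith, ?_⟩
    rw [hc]
    apply inv_anti₀ (by linarith)
    linarith
  rw [← Finset.prod_filter_mul_prod_filter_not q.primeFactors (fun p : ℕ => (p:ℝ)^ε < 2)]
  have hsmall : ∏ p ∈ q.primeFactors.filter (fun p : ℕ => (p:ℝ)^ε < 2), (1 - (p : ℝ) ^ (-ε))⁻¹
      ≤ c ^ T := by
    calc ∏ p ∈ q.primeFactors.filter (fun p : ℕ => (p:ℝ)^ε < 2), (1 - (p : ℝ) ^ (-ε))⁻¹
        ≤ c ^ (q.primeFactors.filter (fun p : ℕ => (p:ℝ)^ε < 2)).card := by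
          rw [← Finset.prod_const]
          exact Finset.prod_le_prod
            (fun p hp => le_of_lt (inv_pos.mpr (hfac p (Finset.mem_filter.mp hp).1).1))
            (fun p hp => (hfac p (Finset.mem_filter.mp hp).1).2)
      _ ≤ c ^ T := by
          apply pow_le_pow_right₀ hc1
          calc (q.primeFactors.filter (fun p : ℕ => (p:ℝ)^ε < 2)).card
              ≤ (Finset.Icc 1 T).card := by
                apply Finset.card_le_card
                intro p hp
                obtain ⟨hp1, hp2⟩ := Finset.mem_filter.mp hp
                have hpp := Nat.prime_of_mem_primeFactors hp1
                have hple : (p:ℝ) ≤ (2:ℝ)^(1/ε) := by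
                  have : ((p:ℝ)^ε)^(1/ε) ≤ ((2:ℝ))^(1/ε) :=
                    Real.rpow_le_rpow (Real.rpow_nonneg (by positivity) _) hp2.le
                      (by positivity)
                  rwa [← Real.rpow_mul (by positivity), mul_one_div, div_self hε.ne',
                    Real.rpow_one] at this
                have : (p:ℝ) ≤ (T:ℝ) := hple.trans (Nat.le_ceil _)
                exact Finset.mem_Icc.mpr ⟨hpp.one_lt.le, by exact_mod_cast this⟩
            _ = T := by rw [Nat.card_Icc]; omega
  have hlarge : ∏ p ∈ q.primeFactors.filter (fun p : ℕ => ¬ (p:ℝ)^ε < 2), (1 - (p : ℝ) ^ (-ε))⁻¹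
      ≤ (q : ℝ) ^ ε := by
    calc ∏ p ∈ q.primeFactors.filter (fun p : ℕ => ¬ (p:ℝ)^ε < 2), (1 - (p : ℝ) ^ (-ε))⁻¹
        ≤ ∏ p ∈ q.primeFactors.filter (fun p : ℕ => ¬ (p:ℝ)^ε < 2), ((p:ℕ) : ℝ) ^ ε := by
          apply Finset.prod_le_prod
          · intro p hp
            exact le_of_lt (inv_pos.mpr (hfac p (Finset.mem_filter.mp hp).1).1)
          · intro p hp
            obtain ⟨hp1, hp2⟩ := Finset.mem_filter.mp hp
            push_neg at hp2
            have hpinv : (p:ℝ)^(-ε) ≤ 2⁻¹ := by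
              rw [Real.rpow_neg (by positivity)]
              exact inv_anti₀ (by norm_num) hp2
            calc (1 - (p : ℝ) ^ (-ε))⁻¹ ≤ 2 := by
                  rw [inv_le_comm₀ (hfac p hp1).1 (by norm_num)]
                  linarith
              _ ≤ (p:ℝ)^ε := hp2
      _ = ((∏ p ∈ q.primeFactors.filter (fun p : ℕ => ¬ (p:ℝ)^ε < 2), p : ℕ) : ℝ) ^ ε := by
          rw [Nat.cast_prod, ← Real.finset_prod_rpow _ _ (fun p _ => by positivity)]
      _ ≤ (q : ℝ) ^ ε := by
          apply Real.rpow_le_rpow (by positivity) _ hε.le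
          have hdvd : (∏ p ∈ q.primeFactors.filter (fun p : ℕ => ¬ (p:ℝ)^ε < 2), p) ≤ q := by
            apply Nat.le_of_dvd (by omega)
            exact (Finset.prod_dvd_prod_of_subset _ _ _ (Finset.filter_subset _ _)).trans
              (Nat.prod_primeFactors_dvd q)
          exact_mod_cast hdvd
  have hpos : (0:ℝ) ≤ ∏ p ∈ q.primeFactors.filter (fun p : ℕ => ¬ (p:ℝ)^ε < 2), (1 - (p : ℝ) ^ (-ε))⁻¹ :=
    Finset.prod_nonneg fun p hp => le_of_lt (inv_pos.mpr (hfac p (Finset.mem_filter.mp hp).1).1)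
  have hpos2 : (0:ℝ) ≤ ∏ p ∈ q.primeFactors.filter (fun p : ℕ => (p:ℝ)^ε < 2), (1 - (p : ℝ) ^ (-ε))⁻¹ :=
    Finset.prod_nonneg fun p hp => le_of_lt (inv_pos.mpr (hfac p (Finset.mem_filter.mp hp).1).1)
  exact mul_le_mul hsmall hlarge hpos (by positivity)

open scoped Classical in
theorem smooth_numbers_count : ∀ ε : ℝ, 0 < ε → ∃ C : ℝ, ∀ (q : ℕ) (X : ℝ), 1 ≤ q → 1 ≤ X →
    ((((Finset.Icc 1 ⌊X⌋₊).filter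
        fun u => ∀ p : ℕ, p.Prime → p ∣ u → p ∣ q).card : ℝ)) ≤
      C * X ^ ε * (q : ℝ) ^ ε := by
  intro ε hε
  refine ⟨((1 - (2:ℝ) ^ (-ε))⁻¹) ^ (⌈(2:ℝ) ^ (1/ε)⌉₊), fun q X hq hX => ?_⟩
  set C : ℝ := ((1 - (2:ℝ) ^ (-ε))⁻¹) ^ (⌈(2:ℝ) ^ (1/ε)⌉₊) with hC
  set S := (Finset.Icc 1 ⌊X⌋₊).filter (fun u => ∀ p : ℕ, p.Prime → p ∣ u → p ∣ q) with hS
  have hK : 1 ≤ ⌊X⌋₊ := Nat.le_floor (by exact_mod_cast hX)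
  set N : ℕ := q ^ ⌊X⌋₊ with hN
  have hN0 : N ≠ 0 := pow_ne_zero _ (by omega)
  -- every element of S divides N
  have hdvd : ∀ u ∈ S, u ∣ N := by
    intro u hu
    obtain ⟨huI, hsm⟩ := Finset.mem_filter.mp hu
    obtain ⟨hu1, huK⟩ := Finset.mem_Icc.mp huI
    have hu0 : u ≠ 0 := by omega
    rw [← Nat.factorization_le_iff_dvd hu0 hN0]
    intro p
    rcases eq_or_ne (u.factorization p) 0 with h0 | h0
    · simp [h0]
    have hpmem : p ∈ u.primeFactors := by
      rw [← Nat.support_factorization]; exact Finsupp.mem_support_iff.mpr h0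
    have hpp := Nat.prime_of_mem_primeFactors hpmem
    have hpq : p ∣ q := hsm p hpp (Nat.dvd_of_mem_primeFactors hpmem)
    have h1 : 1 ≤ q.factorization p := (hpp.factorization_pos_of_dvd (by omega) hpq)
    have h2 : u.factorization p ≤ ⌊X⌋₊ :=
      le_trans (Nat.factorization_lt p hu0).le huK
    calc u.factorization p ≤ ⌊X⌋₊ * 1 := by omega
      _ ≤ ⌊X⌋₊ * q.factorization p := Nat.mul_le_mul_left _ h1
      _ = N.factorization p := by rw [hN, Nat.factorization_pow]; rfl
  have hXpos : (0:ℝ) < X := by linarith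
  -- Rankin step
  have step1 : (S.card : ℝ) ≤ X ^ ε * ∑ d ∈ N.divisors, (d : ℝ) ^ (-ε) := by
    have h1 : (S.card : ℝ) = ∑ u ∈ S, (1:ℝ) := by simp
    rw [h1]
    have h2 : ∑ u ∈ S, (1:ℝ) ≤ ∑ u ∈ S, X ^ ε * (u : ℝ) ^ (-ε) := by
      apply Finset.sum_le_sum
      intro u hu
      obtain ⟨huI, -⟩ := Finset.mem_filter.mp hu
      obtain ⟨hu1, huK⟩ := Finset.mem_Icc.mp huI
      have huX : (u : ℝ) ≤ X := le_trans (by exact_mod_cast huK) (Nat.floor_le hXpos.le)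
      have hup : (0:ℝ) < u := by exact_mod_cast hu1
      rw [Real.rpow_neg hup.le, ← div_eq_mul_inv, le_div_iff₀ (Real.rpow_pos_of_pos hup _),
        one_mul]
      exact Real.rpow_le_rpow hup.le huX hε.le
    refine h2.trans ?_
    rw [← Finset.mul_sum]
    apply mul_le_mul_of_nonneg_left _ (Real.rpow_nonneg hXpos.le _)
    apply Finset.sum_le_sum_of_subset_of_nonneg
    · intro u hu
      have hu1 : 1 ≤ u := (Finset.mem_Icc.mp (Finset.mem_filter.mp hu).1).1
      exact Nat.mem_divisors.mpr ⟨hdvd u hu, hN0⟩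
    · intro d _ _
      rcases Nat.eq_zero_or_pos d with rfl | hd
      · simp [Real.zero_rpow (neg_ne_zero.mpr hε.ne')]
      · positivity
  have step2 : ∑ d ∈ N.divisors, (d : ℝ) ^ (-ε) ≤ C * (q : ℝ) ^ ε := by
    refine (sum_div_le ε hε hN0).trans ?_
    have : N.primeFactors = q.primeFactors := Nat.primeFactors_pow q (by omega)
    rw [this]
    exact prod_bound ε hε q hq
  calc (S.card : ℝ) ≤ X ^ ε * ∑ d ∈ N.divisors, (d : ℝ) ^ (-ε) := step1
    _ ≤ X ^ ε * (C * (q : ℝ) ^ ε) := by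
        apply mul_le_mul_of_nonneg_left step2 (Real.rpow_nonneg hXpos.le _)
    _ = C * X ^ ε * (q : ℝ) ^ ε := by ring
end

section
/- With $\psi$ as defined (the complete character sum $\psi(q) = \sum_{(a,q)=1} \sum_{\mathbf{a},\mathbf{b} \bmod q, \gcd(\mathbf{a},q)=1} e_q(a\sum_j a_j b_j^2)$), for every prime $p$ and positive integer $f$ one has $\psi(p^f) = \varphi(p^f) p^{3sf/2}(1 - p^{-s})$ if $f$ is even, and $\psi(p^f) = 0$ if $f$ is odd. -/
open Finset

lemma sum_exp (m c : ℕ) (hm : 0 < m) :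
    ∑ x ∈ Finset.range m, Complex.exp (2 * Real.pi * Complex.I * ((c : ℂ) * x) / m)
      = if m ∣ c then (m : ℂ) else 0 := by
  have hm' : (m : ℂ) ≠ 0 := Nat.cast_ne_zero.mpr hm.ne'
  have h2 : (2 : ℂ) * Real.pi * Complex.I ≠ 0 := by
    simp [Real.pi_ne_zero, Complex.I_ne_zero, Complex.ofReal_ne_zero]
  have hterm : ∀ x : ℕ, Complex.exp (2 * Real.pi * Complex.I * ((c : ℂ) * x) / m)
      = Complex.exp (2 * Real.pi * Complex.I * c / m) ^ x := by
    intro x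
    rw [← Complex.exp_nat_mul]
    ring_nf
  simp only [hterm]
  by_cases h : m ∣ c
  · obtain ⟨k, rfl⟩ := h
    have h1 : Complex.exp (2 * Real.pi * Complex.I * (↑(m * k)) / m) = 1 := by
      rw [Complex.exp_eq_one_iff]
      exact ⟨k, by push_cast; field_simp⟩
    rw [if_pos (Dvd.intro k rfl), h1]
    simp
  · rw [if_neg h]
    have hz : Complex.exp (2 * Real.pi * Complex.I * c / m) ≠ 1 := by
      intro hone
      rw [Complex.exp_eq_one_iff] at hone
      obtain ⟨n, hn⟩ := hone
      apply h
      have hc : (c : ℂ) = n * m := by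
        field_simp at hn
        linear_combination hn
      have hc' : (c : ℤ) = n * m := by exact_mod_cast hc
      have : (m : ℤ) ∣ (c : ℤ) := ⟨n, by linarith⟩
      exact_mod_cast this
    rw [geom_sum_eq hz]
    have hpow : Complex.exp (2 * Real.pi * Complex.I * c / m) ^ m = 1 := by
      rw [← Complex.exp_nat_mul, Complex.exp_eq_one_iff]
      exact ⟨c, by field_simp; push_cast; ring⟩
    rw [hpow, sub_self, zero_div]

lemma filter_dvd_eq_image (d m : ℕ) (hd : 0 < d) :
    (Finset.range (d * m)).filter (fun x => d ∣ x) = (Finset.range m).image (fun t => d * t) := by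
  ext x
  simp only [mem_filter, mem_range, mem_image]
  constructor
  · rintro ⟨hx, k, rfl⟩
    exact ⟨k, by exact lt_of_mul_lt_mul_left hx (Nat.zero_le d), rfl⟩
  · rintro ⟨t, ht, rfl⟩
    exact ⟨Nat.mul_lt_mul_left hd |>.mpr ht, ⟨t, rfl⟩⟩

lemma card_multiples' (d m : ℕ) (hd : 0 < d) :
    ((Finset.range (d * m)).filter (fun x => d ∣ x)).card = m := by
  rw [filter_dvd_eq_image d m hd, Finset.card_image_of_injective _ fun a b h => by
    exact Nat.eq_of_mul_eq_mul_left hd h]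
  exact Finset.card_range m

lemma dvd_sq_iff (p : ℕ) (hp : p.Prime) (c b : ℕ) : p ^ c ∣ b ^ 2 ↔ p ^ ((c + 1) / 2) ∣ b := by
  rcases Nat.eq_zero_or_pos b with rfl | hb
  · simp
  · rw [Nat.Prime.pow_dvd_iff_le_factorization hp (pow_ne_zero 2 hb.ne'),
      Nat.Prime.pow_dvd_iff_le_factorization hp hb.ne', Nat.factorization_pow]
    simp only [Finsupp.smul_apply, smul_eq_mul]
    omega

lemma card_sq_filter (p f c : ℕ) (hp : p.Prime) (hc : (c + 1) / 2 ≤ f) :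
    ((Finset.range (p ^ f)).filter (fun b => p ^ c ∣ b ^ 2)).card = p ^ (f - (c + 1) / 2) := by
  have h1 : (Finset.range (p ^ f)).filter (fun b => p ^ c ∣ b ^ 2)
      = (Finset.range (p ^ ((c+1)/2) * p ^ (f - (c+1)/2))).filter (fun b => p ^ ((c+1)/2) ∣ b) := by
    rw [← pow_add, Nat.add_sub_cancel' hc]
    exact Finset.filter_congr fun b _ => by rw [dvd_sq_iff p hp]
  rw [h1, card_multiples' _ _ (pow_pos hp.pos _)]

lemma coprime_dvd_mul_iff {a q d n : ℕ} (ha : Nat.Coprime a q) (hd : d ∣ q) :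
    d ∣ a * n ↔ d ∣ n :=
  (Nat.Coprime.coprime_dvd_right hd ha).symm.dvd_mul_left

lemma sum_exp_multiples (p f c : ℕ) (hp : 0 < p) (hf : 1 ≤ f) :
    ∑ x ∈ (Finset.range (p ^ f)).filter (fun x => p ∣ x),
        Complex.exp (2 * Real.pi * Complex.I * ((c : ℂ) * x) / (p ^ f : ℕ))
      = if p ^ (f - 1) ∣ c then ((p ^ (f - 1) : ℕ) : ℂ) else 0 := by
  have hpf : p ^ f = p * p ^ (f - 1) := by
    conv_lhs => rw [show f = 1 + (f - 1) by omega]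
    rw [pow_add, pow_one]
  rw [show (Finset.range (p ^ f)).filter (fun x => p ∣ x)
      = (Finset.range (p ^ (f - 1))).image (fun t => p * t) by
    rw [hpf]; exact filter_dvd_eq_image _ _ hp]
  rw [Finset.sum_image (fun a _ b _ h => Nat.eq_of_mul_eq_mul_left hp h)]
  have hp' : (p : ℂ) ≠ 0 := Nat.cast_ne_zero.mpr hp.ne'
  have hterm : ∀ t : ℕ, Complex.exp (2 * Real.pi * Complex.I * ((c : ℂ) * (p * t : ℕ)) / (p ^ f : ℕ))
      = Complex.exp (2 * Real.pi * Complex.I * ((c : ℂ) * t) / (p ^ (f - 1) : ℕ)) := by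
    intro t
    congr 1
    rw [hpf]
    push_cast
    field_simp
  simp only [hterm]
  rw [sum_exp _ _ (pow_pos hp _)]

noncomputable def psi (s q : ℕ) : ℂ :=
  ∑ a ∈ (Finset.range q).filter (fun a => Nat.Coprime a q),
    ∑ av ∈ (Fintype.piFinset fun _ : Fin s => Finset.range q).filter
        (fun av => Nat.Coprime (Finset.univ.gcd av) q),
      ∑ bv ∈ Fintype.piFinset fun _ : Fin s => Finset.range q,
        Complex.exp (2 * Real.pi * Complex.I *
          ((a : ℂ) * ∑ j, (av j : ℂ) * (bv j : ℂ) ^ 2) / q)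

theorem psi_prime_power (s : ℕ) (hs : 1 ≤ s) (p f : ℕ) (hp : p.Prime) (hf : 1 ≤ f) :
    (Even f → psi s (p ^ f) =
      (Nat.totient (p ^ f) : ℂ) * (p : ℂ) ^ (3 * s * f / 2) * (1 - (p : ℂ) ^ (-(s : ℤ)))) ∧
    (Odd f → psi s (p ^ f) = 0) := by
  have hp0 : 0 < p := hp.pos
  have hq : 0 < p ^ f := pow_pos hp0 f
  have hp' : (p : ℂ) ≠ 0 := Nat.cast_ne_zero.mpr hp0.ne'
  have key : psi s (p ^ f) = (Nat.totient (p ^ f) : ℂ) *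
      ((p : ℂ) ^ ((2 * f - (f + 1) / 2) * s) - (p : ℂ) ^ ((2 * f - 1 - f / 2) * s)) := by
    unfold psi
    have hconst : ∀ a ∈ (Finset.range (p ^ f)).filter (fun a => Nat.Coprime a (p ^ f)),
        (∑ av ∈ (Fintype.piFinset fun _ : Fin s => Finset.range (p ^ f)).filter
            (fun av => Nat.Coprime (Finset.univ.gcd av) (p ^ f)),
          ∑ bv ∈ Fintype.piFinset fun _ : Fin s => Finset.range (p ^ f),
            Complex.exp (2 * Real.pi * Complex.I *
              ((a : ℂ) * ∑ j, (av j : ℂ) * (bv j : ℂ) ^ 2) / (p ^ f : ℕ)))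
        = (p : ℂ) ^ ((2 * f - (f + 1) / 2) * s) - (p : ℂ) ^ ((2 * f - 1 - f / 2) * s) := by
      intro a ha
      rw [Finset.mem_filter] at ha
      have hacop : Nat.Coprime a (p ^ f) := ha.2
      rw [Finset.sum_comm]
      have inner : ∀ bv ∈ Fintype.piFinset fun _ : Fin s => Finset.range (p ^ f),
          (∑ av ∈ (Fintype.piFinset fun _ : Fin s => Finset.range (p ^ f)).filter
              (fun av => Nat.Coprime (Finset.univ.gcd av) (p ^ f)),
            Complex.exp (2 * Real.pi * Complex.I *
              ((a : ℂ) * ∑ j, (av j : ℂ) * (bv j : ℂ) ^ 2) / (p ^ f : ℕ)))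
          = (∏ j : Fin s, if p ^ f ∣ (bv j) ^ 2 then ((p ^ f : ℕ) : ℂ) else 0)
            - ∏ j : Fin s, if p ^ (f - 1) ∣ (bv j) ^ 2 then ((p ^ (f - 1) : ℕ) : ℂ) else 0 := by
        intro bv _
        have expand : ∀ av : Fin s → ℕ,
            Complex.exp (2 * Real.pi * Complex.I *
              ((a : ℂ) * ∑ j, (av j : ℂ) * (bv j : ℂ) ^ 2) / (p ^ f : ℕ))
            = ∏ j : Fin s, Complex.exp (2 * Real.pi * Complex.I *
                (((a * (bv j) ^ 2 : ℕ) : ℂ) * (av j : ℕ)) / (p ^ f : ℕ)) := by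
          intro av
          rw [← Complex.exp_sum]
          congr 1
          rw [Finset.mul_sum, Finset.mul_sum, Finset.sum_div]
          exact Finset.sum_congr rfl fun j _ => by push_cast; ring
        simp only [expand]
        have split := Finset.sum_filter_add_sum_filter_not
          (Fintype.piFinset fun _ : Fin s => Finset.range (p ^ f))
          (fun av => Nat.Coprime (Finset.univ.gcd av) (p ^ f))
          (fun av => ∏ j : Fin s, Complex.exp (2 * Real.pi * Complex.I *
            (((a * (bv j) ^ 2 : ℕ) : ℂ) * (av j : ℕ)) / (p ^ f : ℕ)))
        have hset : (Fintype.piFinset fun _ : Fin s => Finset.range (p ^ f)).filter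
              (fun av => ¬ Nat.Coprime (Finset.univ.gcd av) (p ^ f))
            = Fintype.piFinset fun _ : Fin s =>
                (Finset.range (p ^ f)).filter (fun x => p ∣ x) := by
          ext av
          have hcop : Nat.Coprime (Finset.univ.gcd av) (p ^ f) ↔ ¬ p ∣ Finset.univ.gcd av := by
            rw [Nat.coprime_pow_right_iff (by omega), Nat.coprime_comm]
            exact hp.coprime_iff_not_dvd
          simp only [Finset.mem_filter, Fintype.mem_piFinset, hcop, not_not,
            Finset.dvd_gcd_iff, Finset.mem_univ, forall_true_left, forall_and]
        have hall : (∑ av ∈ Fintype.piFinset fun _ : Fin s => Finset.range (p ^ f),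
              ∏ j : Fin s, Complex.exp (2 * Real.pi * Complex.I *
                (((a * (bv j) ^ 2 : ℕ) : ℂ) * (av j : ℕ)) / (p ^ f : ℕ)))
            = ∏ j : Fin s, if p ^ f ∣ (bv j) ^ 2 then ((p ^ f : ℕ) : ℂ) else 0 := by
          refine Eq.trans (Finset.prod_univ_sum (fun _ : Fin s => Finset.range (p ^ f))
            (fun j y => Complex.exp (2 * Real.pi * Complex.I *
              (((a * (bv j) ^ 2 : ℕ) : ℂ) * (y : ℕ)) / (p ^ f : ℕ)))).symm ?_
          refine Finset.prod_congr rfl fun j _ => ?_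
          rw [sum_exp _ _ hq]
          simp only [coprime_dvd_mul_iff hacop dvd_rfl]
        have hbad : (∑ av ∈ (Fintype.piFinset fun _ : Fin s => Finset.range (p ^ f)).filter
              (fun av => ¬ Nat.Coprime (Finset.univ.gcd av) (p ^ f)),
              ∏ j : Fin s, Complex.exp (2 * Real.pi * Complex.I *
                (((a * (bv j) ^ 2 : ℕ) : ℂ) * (av j : ℕ)) / (p ^ f : ℕ)))
            = ∏ j : Fin s, if p ^ (f - 1) ∣ (bv j) ^ 2 then ((p ^ (f - 1) : ℕ) : ℂ) else 0 := by
          rw [hset]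
          refine Eq.trans (Finset.prod_univ_sum
            (fun _ : Fin s => (Finset.range (p ^ f)).filter (fun x => p ∣ x))
            (fun j y => Complex.exp (2 * Real.pi * Complex.I *
              (((a * (bv j) ^ 2 : ℕ) : ℂ) * (y : ℕ)) / (p ^ f : ℕ)))).symm ?_
          refine Finset.prod_congr rfl fun j _ => ?_
          rw [sum_exp_multiples p f _ hp0 hf]
          simp only [coprime_dvd_mul_iff hacop (pow_dvd_pow p (show f - 1 ≤ f by omega))]
        rw [← hall, ← hbad, ← split]
        ring
      rw [Finset.sum_congr rfl inner, Finset.sum_sub_distrib]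
      have hsum1 : (∑ x ∈ Finset.range (p ^ f), if p ^ f ∣ x ^ 2 then ((p ^ f : ℕ) : ℂ) else 0)
          = (p : ℂ) ^ (2 * f - (f + 1) / 2) := by
        rw [← Finset.sum_filter, Finset.sum_const,
          card_sq_filter p f f hp (by omega), nsmul_eq_mul]
        push_cast
        rw [← pow_add]
        congr 1
        omega
      have hsum2 : (∑ x ∈ Finset.range (p ^ f),
            if p ^ (f - 1) ∣ x ^ 2 then ((p ^ (f - 1) : ℕ) : ℂ) else 0)
          = (p : ℂ) ^ (2 * f - 1 - f / 2) := by
        rw [← Finset.sum_filter, Finset.sum_const,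
          card_sq_filter p f (f - 1) hp (by omega), nsmul_eq_mul]
        push_cast
        rw [← pow_add]
        congr 1
        omega
      have hA : (∑ x ∈ Fintype.piFinset fun _ : Fin s => Finset.range (p ^ f),
            ∏ j : Fin s, if p ^ f ∣ x j ^ 2 then ((p ^ f : ℕ) : ℂ) else 0)
          = ((p : ℂ) ^ (2 * f - (f + 1) / 2)) ^ s := by
        refine Eq.trans (Finset.prod_univ_sum (fun _ : Fin s => Finset.range (p ^ f))
          (fun _ y => if p ^ f ∣ y ^ 2 then ((p ^ f : ℕ) : ℂ) else 0)).symm ?_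
        rw [hsum1, Finset.prod_const, Finset.card_univ, Fintype.card_fin]
      have hB : (∑ x ∈ Fintype.piFinset fun _ : Fin s => Finset.range (p ^ f),
            ∏ j : Fin s, if p ^ (f - 1) ∣ x j ^ 2 then ((p ^ (f - 1) : ℕ) : ℂ) else 0)
          = ((p : ℂ) ^ (2 * f - 1 - f / 2)) ^ s := by
        refine Eq.trans (Finset.prod_univ_sum (fun _ : Fin s => Finset.range (p ^ f))
          (fun _ y => if p ^ (f - 1) ∣ y ^ 2 then ((p ^ (f - 1) : ℕ) : ℂ) else 0)).symm ?_
        rw [hsum2, Finset.prod_const, Finset.card_univ, Fintype.card_fin]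
      rw [hA, hB, ← pow_mul, ← pow_mul]
    rw [Finset.sum_congr rfl hconst, Finset.sum_const, nsmul_eq_mul]
    congr 2
    rw [Nat.totient]
    exact (Finset.card_bij (fun a _ => a) (fun a ha => by
      simp only [Finset.mem_filter, Finset.mem_range] at ha ⊢
      exact ⟨ha.1, ha.2.symm⟩) (fun a _ b _ h => h) (fun b hb => by
      simp only [Finset.mem_filter, Finset.mem_range] at hb ⊢
      exact ⟨b, ⟨hb.1, hb.2.symm⟩, rfl⟩)).symm
  constructor
  · rintro ⟨m, rfl⟩
    have hm : 1 ≤ m := by omega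
    rw [key, show (2 * (m + m) - ((m + m) + 1) / 2) = 3 * m by omega,
      show (2 * (m + m) - 1 - (m + m) / 2) = 3 * m - 1 by omega,
      show 3 * s * (m + m) / 2 = 3 * m * s by
        rw [show 3 * s * (m + m) = (3 * m * s) * 2 by ring]
        exact Nat.mul_div_cancel _ two_pos,
      Nat.sub_mul, one_mul, zpow_neg, zpow_natCast]
    have hle : s ≤ 3 * m * s := Nat.le_mul_of_pos_left s (by omega)
    rw [pow_sub₀ _ hp' hle]
    have hps : (p : ℂ) ^ s ≠ 0 := pow_ne_zero _ hp'
    field_simp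
  · rintro ⟨m, rfl⟩
    rw [key]
    have : (2 * (2 * m + 1) - ((2 * m + 1) + 1) / 2) = (2 * (2 * m + 1) - 1 - (2 * m + 1) / 2) := by
      omega
    rw [this, sub_self, mul_zero]
end

section
/- For each prime $p$ and integer $s \ge 3$, let $n(p^l)$ be the number of pairs $(\mathbf{x}, \mathbf{y}) \in (\mathbb{Z}/p^l\mathbb{Z})^s \times (\mathbb{Z}/p^l\mathbb{Z})^s$ with $x_1 y_1^2 + \cdots + x_s y_s^2 \equiv 0 \pmod{p^l}$. Then $\lim_{l \to \infty} p^{-(2s-1)l} n(p^l) = \frac{1 - p^{-s}}{1 - p^{2-s}}$. -/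
open Finset

namespace LocalDensityAux

lemma addChar_map_sum {ι A M : Type*} [AddCommMonoid A] [CommMonoid M]
    (ψ : AddChar A M) (s : Finset ι) (f : ι → A) :
    ψ (∑ i ∈ s, f i) = ∏ i ∈ s, ψ (f i) := by
  classical
  induction s using Finset.cons_induction with
  | empty => simp
  | cons a s h ih =>
    rw [Finset.sum_cons, Finset.prod_cons, AddChar.map_add_eq_mul, ih]

variable {p : ℕ} (l : ℕ)

/-- valuation of an element of `ZMod (p^l)`, with value `l` at `0`. -/
def vt (p l : ℕ) (t : ZMod (p ^ l)) : ℕ :=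
  if t.val = 0 then l else padicValNat p t.val

lemma range_filter_dvd (hp : p.Prime) (m : ℕ) (hm : m ≤ l) :
    ((Finset.range (p ^ l)).filter (p ^ m ∣ ·)).card = p ^ (l - m) := by
  have hpm : 0 < p ^ m := Nat.pow_pos hp.pos
  have hpl : p ^ l = p ^ m * p ^ (l - m) := by
    rw [← pow_add]; congr 1; omega
  have h1 : (Finset.range (p ^ l)).filter (p ^ m ∣ ·)
      = (Finset.range (p ^ (l - m))).image (p ^ m * ·) := by
    ext n
    simp only [mem_filter, mem_range, mem_image]
    constructor
    · rintro ⟨hlt, c, rfl⟩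
      rw [hpl] at hlt
      exact ⟨c, lt_of_mul_lt_mul_left hlt (Nat.zero_le _), rfl⟩
    · rintro ⟨c, hc, rfl⟩
      refine ⟨?_, ⟨c, rfl⟩⟩
      rw [hpl]
      exact Nat.mul_lt_mul_of_le_of_lt le_rfl hc hpm
  rw [h1, Finset.card_image_of_injective _ (mul_right_injective₀ hpm.ne'),
    Finset.card_range]

lemma card_dvd_filter (hp : p.Prime) [NeZero (p ^ l)] (m : ℕ) (hm : m ≤ l) :
    (Finset.univ.filter fun t : ZMod (p ^ l) => p ^ m ∣ t.val).card = p ^ (l - m) := by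
  rw [← range_filter_dvd l hp m hm]
  apply Finset.card_bij' (fun (t : ZMod (p ^ l)) _ => t.val)
    (fun (n : ℕ) _ => (n : ZMod (p ^ l)))
  · intro t ht
    simp only [mem_filter, mem_univ, mem_range, true_and] at ht ⊢
    exact ⟨ZMod.val_lt t, ht⟩
  · intro n hn
    simp only [mem_filter, mem_range, mem_univ, true_and] at hn ⊢
    rw [ZMod.val_cast_of_lt hn.1]
    exact hn.2
  · intro t _
    exact ZMod.natCast_zmod_val t
  · intro n hn
    simp only [mem_filter, mem_range] at hn
    exact ZMod.val_cast_of_lt hn.1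

lemma vt_lt (hp : p.Prime) [NeZero (p ^ l)] (t : ZMod (p ^ l)) (ht : t ≠ 0) :
    vt p l t < l := by
  have hv : t.val ≠ 0 := fun h => ht ((ZMod.val_eq_zero t).mp h)
  rw [vt, if_neg hv]
  by_contra h
  push_neg at h
  have hdvd : p ^ l ∣ t.val :=
    dvd_trans (pow_dvd_pow p h) pow_padicValNat_dvd
  have hle := Nat.le_of_dvd (Nat.pos_of_ne_zero hv) hdvd
  exact absurd (ZMod.val_lt t) (by omega)

lemma vt_le (hp : p.Prime) [NeZero (p ^ l)] (t : ZMod (p ^ l)) : vt p l t ≤ l := by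
  rcases eq_or_ne t 0 with rfl | ht
  · rw [vt, if_pos (by simp [ZMod.val_zero])]
  · exact (vt_lt l hp t ht).le

lemma dvd_val_iff (hp : p.Prime) [NeZero (p ^ l)] (t : ZMod (p ^ l)) (m : ℕ) (hm : m ≤ l) :
    p ^ m ∣ t.val ↔ m ≤ vt p l t := by
  haveI := Fact.mk hp
  rcases eq_or_ne t 0 with rfl | ht
  · simp only [vt, ZMod.val_zero, if_pos rfl]
    simp [hm]
  · have hv : t.val ≠ 0 := fun h => ht ((ZMod.val_eq_zero t).mp h)
    rw [vt, if_neg hv]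
    exact padicValNat_dvd_iff_le hv

lemma card_w (hp : p.Prime) [NeZero (p ^ l)] (t : ZMod (p ^ l)) :
    (Finset.univ.filter fun u : ZMod (p ^ l) => t * u ^ 2 = 0).card
      = p ^ ((l + vt p l t) / 2) := by
  haveI := Fact.mk hp
  have hvle := vt_le l hp t
  set v := vt p l t with hv
  have key : ∀ u : ZMod (p ^ l), t * u ^ 2 = 0 ↔ p ^ ((l - v + 1) / 2) ∣ u.val := by
    intro u
    have h1 : t * u ^ 2 = ((t.val * u.val ^ 2 : ℕ) : ZMod (p ^ l)) := by
      push_cast [ZMod.natCast_zmod_val]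
      ring
    rw [h1, ZMod.natCast_eq_zero_iff]
    rcases eq_or_ne t 0 with rfl | ht
    · have hz : (0 : ZMod (p ^ l)).val = 0 := ZMod.val_zero
      have hvl : v = l := by rw [hv, vt, if_pos hz]
      simp [hz, hvl]
    · have hval : t.val ≠ 0 := fun h => ht ((ZMod.val_eq_zero t).mp h)
      have hvv : padicValNat p t.val = v := by rw [hv, vt, if_neg hval]
      have hvltl : v < l := vt_lt l hp t ht
      rcases eq_or_ne u 0 with rfl | hu
      · have hz : (0 : ZMod (p ^ l)).val = 0 := ZMod.val_zero
        simp [hz]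
      · have huval : u.val ≠ 0 := fun h => hu ((ZMod.val_eq_zero u).mp h)
        have hprod : t.val * u.val ^ 2 ≠ 0 :=
          mul_ne_zero hval (pow_ne_zero 2 huval)
        rw [padicValNat_dvd_iff_le hprod, padicValNat_dvd_iff_le huval,
          padicValNat.mul hval (pow_ne_zero 2 huval), padicValNat.pow u.val 2, hvv]
        omega
  rw [Finset.filter_congr fun u _ => key u,
    card_dvd_filter l hp ((l - v + 1) / 2) (by omega)]
  congr 1
  omega

lemma card_fiber (hp : p.Prime) [NeZero (p ^ l)] (v : ℕ) (hv : v < l) :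
    (Finset.univ.filter fun t : ZMod (p ^ l) => vt p l t = v).card
      = p ^ (l - v) - p ^ (l - v - 1) := by
  have h1 : (Finset.univ.filter fun t : ZMod (p ^ l) => vt p l t = v)
      = (Finset.univ.filter fun t : ZMod (p ^ l) => p ^ v ∣ t.val) \
        (Finset.univ.filter fun t : ZMod (p ^ l) => p ^ (v + 1) ∣ t.val) := by
    ext t
    simp only [mem_sdiff, mem_filter, mem_univ, true_and]
    rw [dvd_val_iff l hp t v (by omega), dvd_val_iff l hp t (v + 1) (by omega)]
    omega
  have hsub : (Finset.univ.filter fun t : ZMod (p ^ l) => p ^ (v + 1) ∣ t.val)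
      ⊆ Finset.univ.filter fun t : ZMod (p ^ l) => p ^ v ∣ t.val := by
    intro t ht
    simp only [mem_filter, mem_univ, true_and] at ht ⊢
    exact dvd_trans (pow_dvd_pow p (Nat.le_succ v)) ht
  rw [h1, Finset.card_sdiff_of_subset hsub, card_dvd_filter l hp v (by omega),
    card_dvd_filter l hp (v + 1) (by omega),
    show l - (v + 1) = l - v - 1 by omega]

lemma card_fiber_top (hp : p.Prime) [NeZero (p ^ l)] :
    (Finset.univ.filter fun t : ZMod (p ^ l) => vt p l t = l).card = 1 := by
  have h1 : (Finset.univ.filter fun t : ZMod (p ^ l) => vt p l t = l) = {0} := by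
    ext t
    simp only [mem_filter, mem_univ, true_and, mem_singleton]
    constructor
    · intro h
      by_contra ht
      exact absurd h (vt_lt l hp t ht).ne
    · rintro rfl
      rw [vt, if_pos ZMod.val_zero]
  rw [h1, Finset.card_singleton]

lemma card_solutions (hp : p.Prime) [NeZero (p ^ l)] (s : ℕ) (hs : 1 ≤ s) :
    Nat.card {xy : (Fin s → ZMod (p ^ l)) × (Fin s → ZMod (p ^ l)) //
        ∑ i, xy.1 i * (xy.2 i) ^ 2 = 0}
      = (p ^ l) ^ (s - 1) *
          ∑ t : ZMod (p ^ l),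
            (Finset.univ.filter fun u : ZMod (p ^ l) => t * u ^ 2 = 0).card ^ s := by
  classical
  set N := p ^ l with hNdef
  have hN0 : (N : ℂ) ≠ 0 := Nat.cast_ne_zero.mpr (NeZero.ne N)
  set ψ := ZMod.stdAddChar (N := N) with hψdef
  have hψ : ψ.IsPrimitive := ZMod.isPrimitive_stdAddChar N
  have hsum : ∀ c : ZMod N, ∑ t : ZMod N, ψ (t * c) = if c = 0 then (N : ℂ) else 0 := by
    intro c
    rw [AddChar.sum_mulShift c hψ]
    split_ifs <;> simp [ZMod.card]
  have step1 : ∀ c : Fin s → ZMod N,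
      ∑ x : Fin s → ZMod N, ψ (∑ i, x i * c i) = ∏ i, ∑ u : ZMod N, ψ (u * c i) := by
    intro c
    rw [Fintype.prod_sum]
    exact Finset.sum_congr rfl fun x _ => addChar_map_sum ψ univ _
  have wcount : ∀ t : ZMod N, ∑ u : ZMod N, (if t * u ^ 2 = 0 then (N : ℂ) else 0)
      = ((Finset.univ.filter fun u : ZMod N => t * u ^ 2 = 0).card : ℂ) * N := by
    intro t
    rw [Finset.sum_ite, Finset.sum_const, Finset.sum_const_zero, add_zero, nsmul_eq_mul]
  have inner : ∀ t : ZMod N,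
      ∑ xy : (Fin s → ZMod N) × (Fin s → ZMod N), ψ (t * ∑ i, xy.1 i * (xy.2 i) ^ 2)
      = (((Finset.univ.filter fun u : ZMod N => t * u ^ 2 = 0).card : ℂ) * N) ^ s := by
    intro t
    rw [Fintype.sum_prod_type_right]
    have h2 : ∀ y : Fin s → ZMod N,
        ∑ x : Fin s → ZMod N, ψ (t * ∑ i, x i * (y i) ^ 2)
        = ∏ i, (if t * (y i) ^ 2 = 0 then (N : ℂ) else 0) := by
      intro y
      have h3 : ∀ x : Fin s → ZMod N,
          t * ∑ i, x i * (y i) ^ 2 = ∑ i, x i * (t * (y i) ^ 2) := by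
        intro x
        rw [Finset.mul_sum]
        exact Finset.sum_congr rfl fun i _ => by ring
      rw [Finset.sum_congr rfl fun x _ => congrArg ψ (h3 x), step1]
      exact Finset.prod_congr rfl fun i _ => hsum _
    rw [Finset.sum_congr rfl fun y _ => h2 y]
    calc ∑ y : Fin s → ZMod N, ∏ i, (if t * (y i) ^ 2 = 0 then (N : ℂ) else 0)
        = ∏ _i : Fin s, ∑ u : ZMod N, (if t * u ^ 2 = 0 then (N : ℂ) else 0) :=
          (Fintype.prod_sum fun (_ : Fin s) (u : ZMod N) =>
            if t * u ^ 2 = 0 then (N : ℂ) else 0).symm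
      _ = ∏ _i : Fin s, (((Finset.univ.filter fun u : ZMod N => t * u ^ 2 = 0).card : ℂ) * N) :=
          Finset.prod_congr rfl fun i _ => wcount t
      _ = (((Finset.univ.filter fun u : ZMod N => t * u ^ 2 = 0).card : ℂ) * N) ^ s := by
          rw [Finset.prod_const, Finset.card_univ, Fintype.card_fin]
  have key : ((Finset.univ.filter fun xy : (Fin s → ZMod N) × (Fin s → ZMod N) =>
      ∑ i, xy.1 i * (xy.2 i) ^ 2 = 0).card : ℂ)
      = ((N ^ (s - 1) *
          ∑ t : ZMod N, (Finset.univ.filter fun u : ZMod N => t * u ^ 2 = 0).card ^ s : ℕ) : ℂ) := by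
    have ind : ∀ c : ZMod N, (if c = 0 then (1 : ℂ) else 0)
        = (N : ℂ)⁻¹ * ∑ t : ZMod N, ψ (t * c) := by
      intro c
      rw [hsum c]
      split_ifs
      · field_simp
      · simp
    calc ((Finset.univ.filter fun xy : (Fin s → ZMod N) × (Fin s → ZMod N) =>
          ∑ i, xy.1 i * (xy.2 i) ^ 2 = 0).card : ℂ)
        = ∑ xy : (Fin s → ZMod N) × (Fin s → ZMod N),
            if (∑ i, xy.1 i * (xy.2 i) ^ 2) = 0 then (1 : ℂ) else 0 := by
          rw [Finset.card_filter, Nat.cast_sum]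
          exact Finset.sum_congr rfl fun xy _ => by split_ifs <;> simp
      _ = ∑ xy : (Fin s → ZMod N) × (Fin s → ZMod N),
            (N : ℂ)⁻¹ * ∑ t : ZMod N, ψ (t * ∑ i, xy.1 i * (xy.2 i) ^ 2) :=
          Finset.sum_congr rfl fun xy _ => ind _
      _ = (N : ℂ)⁻¹ * ∑ t : ZMod N,
            ∑ xy : (Fin s → ZMod N) × (Fin s → ZMod N), ψ (t * ∑ i, xy.1 i * (xy.2 i) ^ 2) := by
          rw [← Finset.mul_sum, Finset.sum_comm]
      _ = (N : ℂ)⁻¹ * ∑ t : ZMod N,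
            (((Finset.univ.filter fun u : ZMod N => t * u ^ 2 = 0).card : ℂ) * N) ^ s := by
          rw [Finset.sum_congr rfl fun t _ => inner t]
      _ = ((N ^ (s - 1) *
          ∑ t : ZMod N, (Finset.univ.filter fun u : ZMod N => t * u ^ 2 = 0).card ^ s : ℕ) : ℂ) := by
          push_cast
          have hNs : (N : ℂ) ^ s = (N : ℂ) * (N : ℂ) ^ (s - 1) := by
            conv_lhs => rw [show s = 1 + (s - 1) by omega]
            rw [pow_add, pow_one]
          rw [Finset.sum_congr rfl fun (t : ZMod N) (_ : t ∈ univ) => (mul_pow _ (N:ℂ) s)]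
          rw [← Finset.sum_mul, hNs]
          field_simp
  rw [Nat.card_eq_fintype_card, Fintype.card_subtype]
  exact_mod_cast key

lemma sum_w (hp : p.Prime) [NeZero (p ^ l)] (s : ℕ) :
    ∑ t : ZMod (p ^ l),
        (Finset.univ.filter fun u : ZMod (p ^ l) => t * u ^ 2 = 0).card ^ s
      = ∑ v ∈ Finset.range (l + 1),
          (Finset.univ.filter fun t : ZMod (p ^ l) => vt p l t = v).card
            * (p ^ ((l + v) / 2)) ^ s := by
  rw [← Finset.sum_fiberwise_of_maps_to
    (g := fun t : ZMod (p ^ l) => vt p l t) (t := Finset.range (l + 1))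
    (fun t _ => Finset.mem_range.mpr (Nat.lt_succ_of_le (vt_le l hp t)))]
  refine Finset.sum_congr rfl fun v _ => ?_
  rw [Finset.sum_congr rfl fun t ht => ?_, Finset.sum_const, smul_eq_mul]
  simp only [mem_filter] at ht
  rw [card_w l hp t, ht.2]

end LocalDensityAux


noncomputable def aseq (P : ℝ) (s : ℕ) : ℕ → ℝ := fun k =>
  if k = 0 then 1 else (P ^ k - P ^ (k - 1)) * (P ^ (((k + 1) / 2) * s))⁻¹

lemma aseq_zero (P : ℝ) (s : ℕ) : aseq P s 0 = 1 := by simp [aseq]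

lemma aseq_odd (P : ℝ) (hP : P ≠ 0) (s : ℕ) (j : ℕ) :
    aseq P s (2 * j + 1) = ((P - 1) * (P ^ s)⁻¹) * (P ^ 2 * (P ^ s)⁻¹) ^ j := by
  have h2 : (2 * j + 1 + 1) / 2 = j + 1 := by omega
  simp only [aseq, if_neg (by omega : ¬(2 * j + 1 = 0))]
  rw [h2, Nat.add_sub_cancel]
  field_simp
  have hx : P ^ (j * s) * P⁻¹ ^ (j * s) = 1 := by rw [← mul_pow, mul_inv_cancel₀ hP, one_pow]
  linear_combination (-(P * P ^ (j * 2) * P ^ s - P ^ (j * 2) * P ^ s)) * hx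

lemma aseq_even_succ (P : ℝ) (hP : P ≠ 0) (s : ℕ) (j : ℕ) :
    aseq P s (2 * (j + 1)) = ((P ^ 2 - P) * (P ^ s)⁻¹) * (P ^ 2 * (P ^ s)⁻¹) ^ j := by
  have h2 : (2 * (j + 1) + 1) / 2 = j + 1 := by omega
  have h3 : 2 * (j + 1) - 1 = 2 * j + 1 := by omega
  simp only [aseq, if_neg (by omega : ¬(2 * (j + 1) = 0))]
  rw [h2, h3]
  field_simp
  have hx : P ^ (j * s) * P⁻¹ ^ (j * s) = 1 := by rw [← mul_pow, mul_inv_cancel₀ hP, one_pow]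
  linear_combination (-(-(P * P ^ (j * 2) * P ^ s) + P ^ 2 * P ^ (j * 2) * P ^ s)) * hx

theorem local_density' (s : ℕ) (hs : 3 ≤ s) (p : ℕ) (hp : p.Prime) :
    Filter.Tendsto
      (fun l : ℕ => ((p : ℝ) ^ ((2 * s - 1) * l))⁻¹ *
        (Nat.card {xy : (Fin s → ZMod (p ^ l)) × (Fin s → ZMod (p ^ l)) //
          ∑ i, xy.1 i * (xy.2 i) ^ 2 = 0} : ℝ))
      Filter.atTop
      (nhds ((1 - (p : ℝ) ^ (-(s : ℤ))) / (1 - (p : ℝ) ^ ((2 : ℤ) - s)))) := by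
  classical
  have hp1 : (1 : ℝ) < (p : ℝ) := by exact_mod_cast hp.one_lt
  have hP0 : (0 : ℝ) < (p : ℝ) := by linarith
  have hPne : (p : ℝ) ≠ 0 := ne_of_gt hP0
  set P : ℝ := (p : ℝ) with hPdef
  have hPs0 : P ^ s ≠ 0 := pow_ne_zero _ hPne
  have hrlt : P ^ 2 < P ^ s := pow_lt_pow_right₀ hp1 (by omega)
  have hr0 : (0 : ℝ) ≤ P ^ 2 * (P ^ s)⁻¹ := by positivity
  have hr1 : P ^ 2 * (P ^ s)⁻¹ < 1 := by
    rw [← div_eq_mul_inv, div_lt_one (by positivity)]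
    exact hrlt
  have h1r : (1 : ℝ) - P ^ 2 * (P ^ s)⁻¹ ≠ 0 := ne_of_gt (by linarith)
  have hgeo : HasSum (fun n : ℕ => (P ^ 2 * (P ^ s)⁻¹) ^ n)
      (1 - P ^ 2 * (P ^ s)⁻¹)⁻¹ := hasSum_geometric_of_lt_one hr0 hr1
  have hodd : HasSum (fun j => aseq P s (2 * j + 1))
      ((P - 1) * (P ^ s)⁻¹ * (1 - P ^ 2 * (P ^ s)⁻¹)⁻¹) := by
    have h := hgeo.mul_left ((P - 1) * (P ^ s)⁻¹)
    have hfe : (fun j => aseq P s (2 * j + 1))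
        = fun n => ((P - 1) * (P ^ s)⁻¹) * (P ^ 2 * (P ^ s)⁻¹) ^ n :=
      funext fun j => aseq_odd P hPne s j
    rw [hfe, mul_assoc]
    rw [mul_assoc] at h
    exact h
  have heven' : HasSum (fun j => aseq P s (2 * (j + 1)))
      ((P ^ 2 - P) * (P ^ s)⁻¹ * (1 - P ^ 2 * (P ^ s)⁻¹)⁻¹) := by
    have h := hgeo.mul_left ((P ^ 2 - P) * (P ^ s)⁻¹)
    have hfe : (fun j => aseq P s (2 * (j + 1)))
        = fun n => ((P ^ 2 - P) * (P ^ s)⁻¹) * (P ^ 2 * (P ^ s)⁻¹) ^ n :=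
      funext fun j => aseq_even_succ P hPne s j
    rw [hfe, mul_assoc]
    rw [mul_assoc] at h
    exact h
  have heven : HasSum (fun j => aseq P s (2 * j))
      ((P ^ 2 - P) * (P ^ s)⁻¹ * (1 - P ^ 2 * (P ^ s)⁻¹)⁻¹ + 1) := by
    have h := (hasSum_nat_add_iff (f := fun j => aseq P s (2 * j)) 1).mp heven'
    simpa [aseq_zero] using h
  have htot : HasSum (aseq P s)
      ((P ^ 2 - P) * (P ^ s)⁻¹ * (1 - P ^ 2 * (P ^ s)⁻¹)⁻¹ + 1
        + (P - 1) * (P ^ s)⁻¹ * (1 - P ^ 2 * (P ^ s)⁻¹)⁻¹) :=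
    heven.even_add_odd hodd
  have hval : (P ^ 2 - P) * (P ^ s)⁻¹ * (1 - P ^ 2 * (P ^ s)⁻¹)⁻¹ + 1
        + (P - 1) * (P ^ s)⁻¹ * (1 - P ^ 2 * (P ^ s)⁻¹)⁻¹
      = (1 - P ^ (-(s : ℤ))) / (1 - P ^ ((2 : ℤ) - s)) := by
    have hz1 : P ^ (-(s : ℤ)) = (P ^ s)⁻¹ := by
      rw [zpow_neg, zpow_natCast]
    have hz2 : P ^ ((2 : ℤ) - (s : ℤ)) = P ^ 2 * (P ^ s)⁻¹ := by
      rw [zpow_sub₀ hPne, zpow_natCast, div_eq_mul_inv]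
      norm_num
    rw [hz1, hz2, eq_div_iff h1r]
    have h4 : -P ^ 2 + P ^ s ≠ 0 := ne_of_gt (by linarith)
    have h5 : P ^ s - P ^ 2 ≠ 0 := ne_of_gt (by linarith)
    field_simp
    ring
  have hdelta : ∀ l : ℕ,
      ((P ^ ((2 * s - 1) * l))⁻¹ *
        (Nat.card {xy : (Fin s → ZMod (p ^ l)) × (Fin s → ZMod (p ^ l)) //
          ∑ i, xy.1 i * (xy.2 i) ^ 2 = 0} : ℝ))
      = ∑ k ∈ Finset.range (l + 1), aseq P s k := by
    intro l
    haveI : NeZero (p ^ l) := ⟨pow_ne_zero l hp.pos.ne'⟩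
    rw [LocalDensityAux.card_solutions l hp s (by omega),
      LocalDensityAux.sum_w l hp s,
      Finset.sum_range_succ,
      LocalDensityAux.card_fiber_top l hp, one_mul,
      show (l + l) / 2 = l by omega,
      Finset.sum_congr rfl (fun v hv => by
        rw [LocalDensityAux.card_fiber l hp v (Finset.mem_range.mp hv)])]
    have hsum' : (((p ^ l) ^ (s - 1) *
        ((∑ v ∈ Finset.range l,
          (p ^ (l - v) - p ^ (l - v - 1)) * (p ^ ((l + v) / 2)) ^ s) + (p ^ l) ^ s) : ℕ) : ℝ)
        = P ^ (l * (s - 1)) *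
          ((∑ v ∈ Finset.range l,
            (P ^ (l - v) - P ^ (l - v - 1)) * P ^ (((l + v) / 2) * s)) + P ^ (l * s)) := by
      rw [Nat.cast_mul, Nat.cast_add, Nat.cast_sum, Nat.cast_pow, Nat.cast_pow,
        Nat.cast_pow, Nat.cast_pow, ← pow_mul, ← pow_mul]
      congr 1
      congr 1
      refine Finset.sum_congr rfl fun v hv => ?_
      have hvl : v < l := Finset.mem_range.mp hv
      have hle : p ^ (l - v - 1) ≤ p ^ (l - v) :=
        Nat.pow_le_pow_right hp.pos (by omega)
      rw [Nat.cast_mul, Nat.cast_sub hle, Nat.cast_pow, Nat.cast_pow, Nat.cast_pow,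
        Nat.cast_pow, ← pow_mul]
    rw [hsum', Finset.sum_range_succ']
    have htop : (P ^ ((2 * s - 1) * l))⁻¹ * (P ^ (l * (s - 1)) * P ^ (l * s))
        = aseq P s 0 := by
      have hexp : (2 * s - 1) * l = l * (s - 1) + l * s := by
        obtain ⟨s', rfl⟩ : ∃ s', s = s' + 3 := ⟨s - 3, by omega⟩
        rw [show 2 * (s' + 3) - 1 = 2 * s' + 5 by omega,
          show (s' + 3) - 1 = s' + 2 by omega]
        ring
      rw [hexp, pow_add, aseq_zero]
      field_simp
    have hterm : ∀ v ∈ Finset.range l,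
        (P ^ ((2 * s - 1) * l))⁻¹ * (P ^ (l * (s - 1)) *
          ((P ^ (l - v) - P ^ (l - v - 1)) * P ^ (((l + v) / 2) * s)))
        = aseq P s (l - v) := by
      intro v hv
      have hvl : v < l := Finset.mem_range.mp hv
      simp only [aseq, if_neg (by omega : ¬(l - v = 0))]
      have hexp : (2 * s - 1) * l
          = l * (s - 1) + (((l + v) / 2) * s + ((l - v + 1) / 2) * s) := by
        obtain ⟨s', rfl⟩ : ∃ s', s = s' + 3 := ⟨s - 3, by omega⟩
        have e1 : (l + v) / 2 + (l - v + 1) / 2 = l := by omega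
        rw [show 2 * (s' + 3) - 1 = 2 * s' + 5 by omega,
          show (s' + 3) - 1 = s' + 2 by omega, ← add_mul, e1]
        ring
      rw [hexp, pow_add, pow_add]
      have h1 : P ^ (l * (s - 1)) ≠ 0 := pow_ne_zero _ hPne
      have h2 : P ^ (((l + v) / 2) * s) ≠ 0 := pow_ne_zero _ hPne
      have h3 : P ^ (((l - v + 1) / 2) * s) ≠ 0 := pow_ne_zero _ hPne
      field_simp
    rw [mul_add, mul_add, Finset.mul_sum, Finset.mul_sum,
      Finset.sum_congr rfl hterm, htop]
    congr 1
    rw [← Finset.sum_range_reflect (fun k => aseq P s (k + 1)) l]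
    refine Finset.sum_congr rfl fun v hv => ?_
    have hvl : v < l := Finset.mem_range.mp hv
    have heq : l - v = l - 1 - v + 1 := by omega
    rw [heq]
  have h1 := htot.tendsto_sum_nat
  rw [hval] at h1
  have h2 := h1.comp (Filter.tendsto_add_atTop_nat 1)
  exact Filter.Tendsto.congr (fun l => (hdelta l).symm) h2

theorem local_density (s : ℕ) (hs : 3 ≤ s) (p : ℕ) (hp : p.Prime) :
    Filter.Tendsto
      (fun l : ℕ => ((p : ℝ) ^ ((2 * s - 1) * l))⁻¹ *
        (Nat.card {xy : (Fin s → ZMod (p ^ l)) × (Fin s → ZMod (p ^ l)) //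
          ∑ i, xy.1 i * (xy.2 i) ^ 2 = 0} : ℝ))
      Filter.atTop
      (nhds ((1 - (p : ℝ) ^ (-(s : ℤ))) / (1 - (p : ℝ) ^ ((2 : ℤ) - s)))) := by
  exact local_density' s hs p hp
end
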